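/- arXiv:1102.3577 — 4 statements merged into one kernel-verified Lean document; each statement's English description precedes it below -/
import Mathlib

section
/- Let μ be a finite complex measure on the circle 𝕋 = ℝ/2ℤ. If μ̂(n) → 0 as n → −∞, then also μ̂(n) → 0 as n → +∞. -/
open MeasureTheory Filter Metric Set
open scoped ComplexConjugate

noncomputable section

instance : Fact ((0:ℝ) < 2) := ⟨two_pos⟩

/-- The circle `𝕋 = ℝ/2ℤ`. -/
abbrev Circle2 := AddCircle (2 : ℝ)

/-- Integral of `f` against a complex measure, defined via the Jordan decompositions of the
real and imaginary parts. -/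
def cmIntegral (μ : ComplexMeasure Circle2) (f : Circle2 → ℂ) : ℂ :=
  ((∫ x, f x ∂μ.re.toJordanDecomposition.posPart) -
      ∫ x, f x ∂μ.re.toJordanDecomposition.negPart) +
    Complex.I * ((∫ x, f x ∂μ.im.toJordanDecomposition.posPart) -
      ∫ x, f x ∂μ.im.toJordanDecomposition.negPart)

/-- The Fourier coefficient `μ̂(n) = (1/2) ∫_𝕋 e^{iπnx} dμ(x)`; here `fourier n x = exp (iπnx)`
on `AddCircle 2`. -/
def cmFourierCoeff (μ : ComplexMeasure Circle2) (n : ℤ) : ℂ :=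
  (1 / 2 : ℂ) * cmIntegral μ (fun x => fourier n x)

/-- The support of the Fourier transform of `μ`. -/
def fourierSupport (μ : ComplexMeasure Circle2) : Set ℤ := {n | cmFourierCoeff μ n ≠ 0}

/-- A positive measure with the same null sets as the total variation `|μ|`. -/
def cmVariation (μ : ComplexMeasure Circle2) : Measure Circle2 :=
  μ.re.totalVariation + μ.im.totalVariation

/-- `μ` is concentrated on `E`, i.e. `|μ|(𝕋 ∖ E) = 0`. -/
def ConcentratedOn (μ : ComplexMeasure Circle2) (E : Set Circle2) : Prop :=
  cmVariation μ Eᶜ = 0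

/-- `Λ ⊆ ℤ` is a Rajchman set. -/
def IsRajchman (Λ : Set ℤ) : Prop :=
  ∀ μ : ComplexMeasure Circle2,
    Tendsto (cmFourierCoeff μ) (Filter.cofinite ⊓ Filter.principal Λᶜ) (nhds 0) →
    Tendsto (cmFourierCoeff μ) (Filter.cofinite ⊓ Filter.principal Λ) (nhds 0)

/-- `Λ ⊆ ℤ` is a Riesz set. -/
def IsRiesz (Λ : Set ℤ) : Prop :=
  ∀ μ : ComplexMeasure Circle2, fourierSupport μ ⊆ Λ →
    μ ≪ᵥ (volume : Measure Circle2).toENNRealVectorMeasure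

/-- `E ⊆ 𝕋` is a parisian set. -/
def IsParisian (E : Set Circle2) : Prop :=
  ∀ μ : ComplexMeasure Circle2, ConcentratedOn μ E →
    ¬ μ ≪ᵥ (volume : Measure Circle2).toENNRealVectorMeasure →
    ¬ IsRajchman (fourierSupport μ)

/-- `Ω((n_j)) = {∑ ε_j n_j : ε_j ∈ {-1,0,1}, finitely many nonzero}`. -/
def Omega (n : ℕ → ℤ) : Set ℤ :=
  {k | ∃ (F : Finset ℕ) (ε : ℕ → ℤ),
    (∀ j, ε j = -1 ∨ ε j = 0 ∨ ε j = 1) ∧ k = ∑ j ∈ F, ε j * n j}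

/-- The image of `(2/N)ℤ` in `𝕋`. -/
def grid (N : ℕ) : Set Circle2 := Set.range fun k : ℤ => ((2 * k / N : ℝ) : Circle2)

/-- `A(N,δ)`: the points of `𝕋` within distance `1/(2N^{1+δ})` of `(2/N)ℤ`. -/
def nbhdGrid (N : ℕ) (δ : ℝ) : Set Circle2 :=
  {x | Metric.infDist x (grid N) ≤ 1 / (2 * (N : ℝ) ^ ((1 : ℝ) + δ))}

/-- `Ẽ = {x ∈ 𝕋 : sup_j N_j^{1+δ}·dist(x, (2/N_j)ℤ) < ∞}`. -/
def Etilde (N : ℕ → ℕ) (δ : ℝ) : Set Circle2 :=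
  {x | ∃ C : ℝ, ∀ j, (N j : ℝ) ^ ((1 : ℝ) + δ) * Metric.infDist x (grid (N j)) ≤ C}

/-- The total variation norm `‖μ‖` of a complex measure, as the supremum of
`∑ |μ(B i)|` over finite disjoint families of measurable sets. -/
def cmNorm (μ : ComplexMeasure Circle2) : ℝ :=
  sSup {r : ℝ | ∃ (n : ℕ) (B : Fin n → Set Circle2), (∀ i, MeasurableSet (B i)) ∧
    (∀ i j, i ≠ j → Disjoint (B i) (B j)) ∧ r = ∑ i, ‖μ (B i)‖}

/-- Fourier coefficient of a positive measure. -/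
def posFourierCoeff (μ : Measure Circle2) (n : ℤ) : ℂ :=
  (1 / 2 : ℂ) * ∫ x, fourier n x ∂μ


lemma norm_fourier2 (n : ℤ) (x : Circle2) : ‖fourier n x‖ = 1 := by
  simp [fourier_apply, Circle.norm_coe]

lemma integrable_fourier_mul {ν : Measure Circle2} {w : Circle2 → ℂ}
    (hw : Integrable w ν) (n : ℤ) : Integrable (fun x => fourier n x * w x) ν :=
  hw.bdd_mul ((map_continuous (fourier n)).aestronglyMeasurable)
    (Filter.Eventually.of_forall fun x => le_of_eq (norm_fourier2 n x))

lemma integrable_of_bdd {τ : Measure Circle2} [IsFiniteMeasure τ] {E : Type*}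
    [NormedAddCommGroup E] {f : Circle2 → E} (hf : AEStronglyMeasurable f τ)
    (C : ℝ) (h : ∀ x, ‖f x‖ ≤ C) : Integrable f τ :=
  ⟨hf, HasFiniteIntegral.of_bounded (C := C) (Filter.Eventually.of_forall h)⟩

lemma span_tendsto (ν : Measure Circle2) [IsFiniteMeasure ν] {w : Circle2 → ℂ}
    (hw : Integrable w ν)
    (h : Tendsto (fun n : ℤ => ∫ x, fourier n x * w x ∂ν) atBot (nhds 0))
    (p : C(Circle2, ℂ)) (hp : p ∈ Submodule.span ℂ (Set.range (@fourier 2))) :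
    Tendsto (fun n : ℤ => ∫ x, fourier n x * (p x * w x) ∂ν) atBot (nhds 0) := by
  have hint : ∀ (q : C(Circle2, ℂ)) (n : ℤ),
      Integrable (fun x => fourier n x * (q x * w x)) ν := by
    intro q n
    exact integrable_fourier_mul
      (hw.bdd_mul (map_continuous q).aestronglyMeasurable
        (Filter.Eventually.of_forall fun x => q.norm_coe_le_norm x)) n
  induction hp using Submodule.span_induction with
  | mem p hp =>
      obtain ⟨m, rfl⟩ := hp
      have heq : ∀ n : ℤ, ∫ x, fourier n x * (fourier m x * w x) ∂ν
          = ∫ x, fourier (n + m) x * w x ∂ν := by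
        intro n
        refine integral_congr_ae (Filter.Eventually.of_forall fun x => ?_)
        simp [fourier_add, mul_assoc]
      simp_rw [heq]
      exact h.comp (tendsto_atBot_add_const_right _ m tendsto_id)
  | zero => simpa using tendsto_const_nhds
  | add p q hp hq ihp ihq =>
      have heq : ∀ n : ℤ, ∫ x, fourier n x * ((p + q) x * w x) ∂ν
          = (∫ x, fourier n x * (p x * w x) ∂ν) + ∫ x, fourier n x * (q x * w x) ∂ν := by
        intro n
        rw [← integral_add (hint p n) (hint q n)]
        refine integral_congr_ae (Filter.Eventually.of_forall fun x => ?_)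
        simp [add_mul, mul_add]
      simp_rw [heq]
      simpa using ihp.add ihq
  | smul c p hp ih =>
      have heq : ∀ n : ℤ, ∫ x, fourier n x * ((c • p) x * w x) ∂ν
          = c * ∫ x, fourier n x * (p x * w x) ∂ν := by
        intro n
        rw [← integral_const_mul]
        refine integral_congr_ae (Filter.Eventually.of_forall fun x => ?_)
        simp; ring
      simp_rw [heq]
      simpa using ih.const_mul c

lemma key_lemma (ν : Measure Circle2) [IsFiniteMeasure ν] {w : Circle2 → ℂ}
    (hwm : Measurable w) (hw : Integrable w ν)
    (h : Tendsto (fun n : ℤ => ∫ x, fourier n x * w x ∂ν) atBot (nhds 0))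
    {u : Circle2 → ℂ} (hu : Measurable u) (hub : ∀ x, ‖u x‖ ≤ 1) :
    Tendsto (fun n : ℤ => ∫ x, fourier n x * (u x * w x) ∂ν) atBot (nhds 0) := by
  set τ : Measure Circle2 := ν.withDensity (fun x => (‖w x‖₊ : ENNReal)) with hτ
  haveI : IsFiniteMeasure τ := isFiniteMeasure_withDensity hw.2.ne
  -- integral of norms against τ
  have hτint : ∀ (v : Circle2 → ℂ), ∫ x, ‖v x‖ ∂τ = ∫ x, ‖v x‖ * ‖w x‖ ∂ν := by
    intro v
    rw [hτ, integral_withDensity_eq_integral_smul hwm.nnnorm]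
    refine integral_congr_ae (Filter.Eventually.of_forall fun x => ?_)
    simp [NNReal.smul_def, mul_comm]
  rw [NormedAddCommGroup.tendsto_nhds_zero]
  intro ε hε
  -- approximate u by a bounded continuous function in L¹(τ)
  have huτ : Integrable u τ := integrable_of_bdd hu.aestronglyMeasurable 1 hub
  obtain ⟨φ, hφ, -⟩ := huτ.exists_boundedContinuous_integral_sub_le (by positivity : 0 < ε/4)
  -- approximate φ by a trigonometric polynomial uniformly
  have hεδ : 0 < ε / (4 * ((τ Set.univ).toReal + 1)) := by
    have : (0:ℝ) ≤ (τ Set.univ).toReal := ENNReal.toReal_nonneg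
    positivity
  have hmem : (φ.toContinuousMap : C(Circle2, ℂ)) ∈
      (Submodule.span ℂ (Set.range (@fourier 2))).topologicalClosure := by
    rw [span_fourier_closure_eq_top]; trivial
  have hmem' : (φ.toContinuousMap : C(Circle2, ℂ)) ∈
      closure ((Submodule.span ℂ (Set.range (@fourier 2))) : Set C(Circle2, ℂ)) := by
    rw [← Submodule.topologicalClosure_coe]; exact hmem
  obtain ⟨p, hpmem, hpdist⟩ := Metric.mem_closure_iff.1 hmem' _ hεδ
  -- uniform bound ‖φ x - p x‖
  have hpbound : ∀ x, ‖φ x - p x‖ ≤ ε / (4 * ((τ Set.univ).toReal + 1)) := by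
    intro x
    calc ‖φ x - p x‖ = ‖(φ.toContinuousMap - p) x‖ := by simp
    _ ≤ ‖φ.toContinuousMap - p‖ := ContinuousMap.norm_coe_le_norm _ x
    _ ≤ _ := by
        rw [← dist_eq_norm]
        exact le_of_lt hpdist
  have hptend := span_tendsto ν hw h p hpmem
  have hev := (NormedAddCommGroup.tendsto_nhds_zero.1 hptend) (ε/2) (by positivity)
  filter_upwards [hev] with n hn
  have hintu : Integrable (fun x => fourier n x * (u x * w x)) ν :=
    integrable_fourier_mul (hw.bdd_mul hu.aestronglyMeasurable (Filter.Eventually.of_forall hub)) n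
  have hintp : Integrable (fun x => fourier n x * (p x * w x)) ν :=
    integrable_fourier_mul (hw.bdd_mul (map_continuous p).aestronglyMeasurable
      (Filter.Eventually.of_forall fun x => p.norm_coe_le_norm x)) n
  have i0 : Integrable (fun x => ‖u x - p x‖) τ := by
    refine integrable_of_bdd ((hu.sub (map_continuous p).measurable).aestronglyMeasurable.norm)
      (1 + ‖p‖) fun x => ?_
    rw [norm_norm]
    exact (norm_sub_le _ _).trans (add_le_add (hub x) (p.norm_coe_le_norm x))
  have i1 : Integrable (fun x => ‖u x - φ x‖) τ := by
    refine integrable_of_bdd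
      ((hu.sub (map_continuous φ.toContinuousMap).measurable).aestronglyMeasurable.norm)
      (1 + ‖φ‖) fun x => ?_
    rw [norm_norm]
    exact (norm_sub_le _ _).trans (add_le_add (hub x) (φ.norm_coe_le_norm x))
  have i2 : Integrable (fun x => ‖φ x - p x‖) τ := by
    refine integrable_of_bdd
      (((map_continuous φ.toContinuousMap).measurable.sub
        (map_continuous p).measurable).aestronglyMeasurable.norm)
      (‖φ‖ + ‖p‖) fun x => ?_
    rw [norm_norm]
    exact (norm_sub_le _ _).trans (add_le_add (φ.norm_coe_le_norm x) (p.norm_coe_le_norm x))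
  have hdiff : ‖(∫ x, fourier n x * (u x * w x) ∂ν) - ∫ x, fourier n x * (p x * w x) ∂ν‖
      ≤ ε / 2 := by
    rw [← integral_sub hintu hintp]
    calc ‖∫ x, (fourier n x * (u x * w x) - fourier n x * (p x * w x)) ∂ν‖
        ≤ ∫ x, ‖fourier n x * (u x * w x) - fourier n x * (p x * w x)‖ ∂ν :=
          norm_integral_le_integral_norm _
      _ = ∫ x, ‖u x - p x‖ * ‖w x‖ ∂ν := by
          refine integral_congr_ae (Filter.Eventually.of_forall fun x => ?_)
          show ‖fourier n x * (u x * w x) - fourier n x * (p x * w x)‖ = _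
          rw [← mul_sub, ← sub_mul, norm_mul, norm_mul, norm_fourier2, one_mul]
      _ = ∫ x, ‖u x - p x‖ ∂τ := (hτint (fun x => u x - p x)).symm
      _ ≤ (∫ x, ‖u x - φ x‖ ∂τ) + ∫ x, ‖φ x - p x‖ ∂τ := by
          rw [← integral_add i1 i2]
          refine integral_mono i0 (i1.add i2) fun x => ?_
          have := dist_triangle (u x) (φ x) (p x)
          simpa [dist_eq_norm] using this
      _ ≤ ε / 4 + ε / 4 := by
          refine add_le_add hφ ?_
          have hb : ∫ x, ‖φ x - p x‖ ∂τ
              ≤ ∫ _x, ε / (4 * ((τ Set.univ).toReal + 1)) ∂τ :=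
            integral_mono i2 (integrable_const _) hpbound
          rw [integral_const, smul_eq_mul, measureReal_def] at hb
          refine hb.trans ?_
          set T := (τ Set.univ).toReal with hT
          have hT0 : 0 ≤ T := ENNReal.toReal_nonneg
          rw [mul_comm, div_mul_eq_mul_div, div_le_div_iff₀ (by positivity) (by positivity)]
          nlinarith
      _ = ε / 2 := by ring
  calc ‖∫ x, fourier n x * (u x * w x) ∂ν‖
      ≤ ‖(∫ x, fourier n x * (u x * w x) ∂ν) - ∫ x, fourier n x * (p x * w x) ∂ν‖
        + ‖∫ x, fourier n x * (p x * w x) ∂ν‖ := by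
        simpa using norm_add_le ((∫ x, fourier n x * (u x * w x) ∂ν)
          - ∫ x, fourier n x * (p x * w x) ∂ν) (∫ x, fourier n x * (p x * w x) ∂ν)
    _ < ε / 2 + ε / 2 := by
        exact add_lt_add_of_le_of_lt hdiff hn
    _ = ε := by ring

/-- **Rajchman, 1929.** If `μ̂(n) → 0` as `n → -∞`, then `μ̂(n) → 0` as `n → +∞`. -/
theorem rajchman_theorem (μ : ComplexMeasure Circle2)
    (h : Tendsto (cmFourierCoeff μ) Filter.atBot (nhds 0)) :
    Tendsto (cmFourierCoeff μ) Filter.atTop (nhds 0) := by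
  set ν₁ := μ.re.toJordanDecomposition.posPart with hν₁
  set ν₂ := μ.re.toJordanDecomposition.negPart with hν₂
  set ν₃ := μ.im.toJordanDecomposition.posPart with hν₃
  set ν₄ := μ.im.toJordanDecomposition.negPart with hν₄
  set ν : Measure Circle2 := ν₁ + ν₂ + ν₃ + ν₄ with hν
  have hle₁ : ν₁ ≤ ν := (Measure.le_add_right (Measure.le_add_right (Measure.le_add_right le_rfl)))
  have hle₂ : ν₂ ≤ ν := (Measure.le_add_right (Measure.le_add_right (Measure.le_add_left le_rfl)))
  have hle₃ : ν₃ ≤ ν := (Measure.le_add_right (Measure.le_add_left le_rfl))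
  have hle₄ : ν₄ ≤ ν := Measure.le_add_left le_rfl
  have hac₁ := hle₁.absolutelyContinuous
  have hac₂ := hle₂.absolutelyContinuous
  have hac₃ := hle₃.absolutelyContinuous
  have hac₄ := hle₄.absolutelyContinuous
  set d : ℕ → Circle2 → ℝ := fun i x => match i with
    | 1 => (ν₁.rnDeriv ν x).toReal
    | 2 => (ν₂.rnDeriv ν x).toReal
    | 3 => (ν₃.rnDeriv ν x).toReal
    | _ => (ν₄.rnDeriv ν x).toReal with hd
  set w : Circle2 → ℂ := fun x =>
    ((d 1 x - d 2 x : ℝ) : ℂ) + Complex.I * ((d 3 x - d 4 x : ℝ) : ℂ) with hwdef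
  have hwm : Measurable w := by
    apply Measurable.add
    · exact Complex.measurable_ofReal.comp
        (((ν₁.measurable_rnDeriv ν).ennreal_toReal).sub
          ((ν₂.measurable_rnDeriv ν).ennreal_toReal))
    · exact (Complex.measurable_ofReal.comp
        (((ν₃.measurable_rnDeriv ν).ennreal_toReal).sub
          ((ν₄.measurable_rnDeriv ν).ennreal_toReal))).const_mul _
  have hd_int : ∀ i, Integrable (d i) ν := by
    intro i
    match i with
    | 1 => exact Measure.integrable_toReal_rnDeriv
    | 2 => exact Measure.integrable_toReal_rnDeriv
    | 3 => exact Measure.integrable_toReal_rnDeriv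
    | (n+4) => exact Measure.integrable_toReal_rnDeriv
    | 0 => exact Measure.integrable_toReal_rnDeriv
  have hw : Integrable w ν := by
    refine Integrable.add ?_ (Integrable.const_mul ?_ _)
    · exact ((hd_int 1).sub (hd_int 2)).ofReal
    · exact ((hd_int 3).sub (hd_int 4)).ofReal
  -- the four integrals
  have hIi : ∀ (n : ℤ) (νi : Measure Circle2) (_ : IsFiniteMeasure νi), νi ≪ ν → ∀ di : Circle2 → ℝ,
      (∀ x, di x = (νi.rnDeriv ν x).toReal) →
      ∫ x, fourier n x * (di x : ℂ) ∂ν = ∫ x, fourier n x ∂νi := by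
    intro n νi hfin haci di hdi
    haveI := hfin
    haveI : IsFiniteMeasure ν := by rw [hν]; infer_instance
    haveI : νi.HaveLebesgueDecomposition ν :=
      Measure.haveLebesgueDecomposition_of_sigmaFinite (μ := νi) (ν := ν)
    rw [← MeasureTheory.integral_rnDeriv_smul haci (f := fun x => fourier n x)]
    refine integral_congr_ae (Filter.Eventually.of_forall fun x => ?_)
    show fourier n x * ((di x : ℝ) : ℂ) = (νi.rnDeriv ν x).toReal • fourier n x
    rw [hdi x, Complex.real_smul, mul_comm]
  have coeff_eq : ∀ n : ℤ, cmFourierCoeff μ n = (1/2 : ℂ) * ∫ x, fourier n x * w x ∂ν := by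
    intro n
    have expand : ∫ x, fourier n x * w x ∂ν =
        ((∫ x, fourier n x * (d 1 x : ℂ) ∂ν) - ∫ x, fourier n x * (d 2 x : ℂ) ∂ν) +
        Complex.I * ((∫ x, fourier n x * (d 3 x : ℂ) ∂ν)
          - ∫ x, fourier n x * (d 4 x : ℂ) ∂ν) := by
      have ii : ∀ i, Integrable (fun x => fourier n x * (d i x : ℂ)) ν := fun i =>
        integrable_fourier_mul (hd_int i).ofReal n
      calc ∫ x, fourier n x * w x ∂ν
          = ∫ x, ((fourier n x * (d 1 x : ℂ) - fourier n x * (d 2 x : ℂ))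
              + Complex.I * (fourier n x * (d 3 x : ℂ) - fourier n x * (d 4 x : ℂ))) ∂ν := by
            refine integral_congr_ae (Filter.Eventually.of_forall fun x => ?_)
            show fourier n x * w x = _
            rw [hwdef]
            push_cast
            ring
        _ = _ := by
            have i12 : Integrable (fun x => fourier n x * (d 1 x : ℂ)
                - fourier n x * (d 2 x : ℂ)) ν := (ii 1).sub (ii 2)
            have i34 : Integrable (fun x => Complex.I * (fourier n x * (d 3 x : ℂ)
                - fourier n x * (d 4 x : ℂ))) ν := ((ii 3).sub (ii 4)).const_mul _
            rw [integral_add i12 i34, integral_sub (ii 1) (ii 2), integral_const_mul,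
              integral_sub (ii 3) (ii 4)]
    rw [cmFourierCoeff, cmIntegral, expand,
      hIi n ν₁ inferInstance hac₁ (d 1) (fun x => rfl), hIi n ν₂ inferInstance hac₂ (d 2) (fun x => rfl),
      hIi n ν₃ inferInstance hac₃ (d 3) (fun x => rfl), hIi n ν₄ inferInstance hac₄ (d 4) (fun x => rfl)]
  -- hypothesis in density form
  have h' : Tendsto (fun n : ℤ => ∫ x, fourier n x * w x ∂ν) atBot (nhds 0) := by
    have := h.const_mul (2 : ℂ)
    rw [mul_zero] at this
    refine this.congr fun n => ?_
    rw [coeff_eq n]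
    ring
  -- the unimodular density
  set u : Circle2 → ℂ := fun x => if w x = 0 then 0 else conj (w x) / w x with hu
  have hum : Measurable u := by
    refine Measurable.ite (hwm (measurableSet_singleton 0)) measurable_const ?_
    exact (Complex.continuous_conj.measurable.comp hwm).div hwm
  have hub : ∀ x, ‖u x‖ ≤ 1 := by
    intro x
    rw [hu]
    by_cases hx : w x = 0
    · simp [hx]
    · simp only [hx, if_false, norm_div, RCLike.norm_conj]
      rw [div_self (by simpa using hx)]
  have huw : ∀ x, u x * w x = conj (w x) := by
    intro x
    rw [hu]
    by_cases hx : w x = 0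
    · simp [hx]
    · simp [hx, div_mul_cancel₀]
  have hconj : Tendsto (fun n : ℤ => ∫ x, fourier n x * conj (w x) ∂ν) atBot (nhds 0) := by
    have := key_lemma ν hwm hw h' hum hub
    refine this.congr fun n => ?_
    refine integral_congr_ae (Filter.Eventually.of_forall fun x => ?_)
    show fourier n x * (u x * w x) = fourier n x * conj (w x)
    rw [huw x]
  -- conclude
  have hkey : ∀ n : ℤ, ∫ x, fourier n x * w x ∂ν
      = conj (∫ x, fourier (-n) x * conj (w x) ∂ν) := by
    intro n
    rw [← integral_conj]
    refine integral_congr_ae (Filter.Eventually.of_forall fun x => ?_)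
    show fourier n x * w x = conj (fourier (-n) x * conj (w x))
    rw [map_mul, fourier_neg, Complex.conj_conj, Complex.conj_conj]
  have hfinal : Tendsto (fun n : ℤ => ∫ x, fourier n x * w x ∂ν) atTop (nhds 0) := by
    have h1 : Tendsto (fun n : ℤ => ∫ x, fourier (-n) x * conj (w x) ∂ν) atTop (nhds 0) :=
      hconj.comp tendsto_neg_atTop_atBot
    have h2 := ((Complex.continuous_conj.tendsto 0).comp h1)
    rw [map_zero] at h2
    refine h2.congr fun n => ?_
    exact (hkey n).symm
  have := hfinal.const_mul ((1:ℂ)/2)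
  rw [mul_zero] at this
  refine this.congr fun n => ?_
  exact (coeff_eq n).symm

end
end

section
/- Let δ > 0, let (N_j)_{j≥1} be a strictly increasing sequence of positive integers, and let E ⊆ 𝕋 satisfy E ⊆ A(N_j, δ) for every j. Then for every nonzero finite complex measure μ on 𝕋 concentrated on E there exist an integer m and a strictly increasing sequence (n_j)_{j≥1} of positive integers (a subsequence of (N_j)) such that m + Ω((n_j)) ⊆ supp(μ̂). -/
open MeasureTheory Filter Metric Set

noncomputable section

/-! ### Auxiliary lemmas -/

section Aux

open Submodule

lemma cont_integrable (p : Measure Circle2) [IsFiniteMeasure p] {f : Circle2 → ℂ}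
    (hf : Continuous f) : Integrable f p :=
  hf.integrable_of_hasCompactSupport (HasCompactSupport.of_compactSpace f)

lemma integral_cm_continuous (p : Measure Circle2) [IsFiniteMeasure p] :
    Continuous fun f : C(Circle2, ℂ) => ∫ x, f x ∂p := by
  apply LipschitzWith.continuous (K := Real.toNNReal (p Set.univ).toReal)
  apply LipschitzWith.of_dist_le_mul
  intro f g
  rw [dist_eq_norm, ← integral_sub (cont_integrable p f.continuous) (cont_integrable p g.continuous)]
  calc ‖∫ x, (f x - g x) ∂p‖ ≤ dist f g * (p Set.univ).toReal := by
        apply norm_integral_le_of_norm_le_const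
        filter_upwards with x
        rw [← dist_eq_norm]
        exact ContinuousMap.dist_apply_le_dist x
    _ = ↑(Real.toNNReal (p Set.univ).toReal) * dist f g := by
        rw [Real.coe_toNNReal _ ENNReal.toReal_nonneg, mul_comm]

lemma integral_eq_of_fourier {p q : Measure Circle2} [IsFiniteMeasure p] [IsFiniteMeasure q]
    (h : ∀ n : ℤ, ∫ x, fourier n x ∂p = ∫ x, fourier n x ∂q) (f : C(Circle2, ℂ)) :
    ∫ x, f x ∂p = ∫ x, f x ∂q := by
  set T : Submodule ℂ C(Circle2, ℂ) :=
    { carrier := {f | ∫ x, f x ∂p = ∫ x, f x ∂q}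
      add_mem' := by
        intro a b ha hb
        simp only [Set.mem_setOf_eq, ContinuousMap.add_apply] at *
        rw [integral_add (cont_integrable p a.continuous) (cont_integrable p b.continuous),
          integral_add (cont_integrable q a.continuous) (cont_integrable q b.continuous), ha, hb]
      zero_mem' := by simp
      smul_mem' := by
        intro c a ha
        simp only [Set.mem_setOf_eq, ContinuousMap.smul_apply] at *
        rw [integral_smul, integral_smul, ha] } with hT
  have hclosed : IsClosed (T : Set C(Circle2, ℂ)) :=
    isClosed_eq (integral_cm_continuous p) (integral_cm_continuous q)
  have hspan : span ℂ (Set.range (@fourier 2)) ≤ T := by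
    rw [span_le]
    rintro - ⟨n, rfl⟩
    exact h n
  have htop := span_fourier_closure_eq_top (T := 2)
  have hf : f ∈ (span ℂ (Set.range (@fourier 2))).topologicalClosure := by
    rw [htop]; trivial
  have : f ∈ closure (T : Set C(Circle2, ℂ)) :=
    closure_mono hspan hf
  rwa [hclosed.closure_eq] at this

lemma measure_eq_of_fourier {p q : Measure Circle2} [IsFiniteMeasure p] [IsFiniteMeasure q]
    (h : ∀ n : ℤ, ∫ x, fourier n x ∂p = ∫ x, fourier n x ∂q) : p = q := by
  apply ext_of_forall_lintegral_eq_of_IsFiniteMeasure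
  intro f
  have hfr : Continuous fun x => ((f x : ℝ)) := NNReal.continuous_coe.comp f.continuous
  have hfc : Continuous fun x => ((f x : ℝ) : ℂ) := Complex.continuous_ofReal.comp hfr
  have key := integral_eq_of_fourier h ⟨fun x => ((f x : ℝ) : ℂ), hfc⟩
  simp only [ContinuousMap.coe_mk] at key
  have e1 : ∫ x, ((f x : ℝ) : ℂ) ∂p = ((∫ x, (f x : ℝ) ∂p : ℝ) : ℂ) := integral_ofReal
  have e2 : ∫ x, ((f x : ℝ) : ℂ) ∂q = ((∫ x, (f x : ℝ) ∂q : ℝ) : ℂ) := integral_ofReal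
  rw [e1, e2] at key
  have hre : ∫ x, (f x : ℝ) ∂p = ∫ x, (f x : ℝ) ∂q := by exact_mod_cast key
  have hip : Integrable (fun x => (f x : ℝ)) p := by
    have := cont_integrable p hfc
    simpa using this.re
  have hiq : Integrable (fun x => (f x : ℝ)) q := by
    have := cont_integrable q hfc
    simpa using this.re
  rw [lintegral_coe_eq_integral _ hip, lintegral_coe_eq_integral _ hiq, hre]

lemma exists_fourier_ne_zero {μ : ComplexMeasure Circle2} (hne : μ ≠ 0) :
    ∃ m : ℤ, cmFourierCoeff μ m ≠ 0 := by
  by_contra hc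
  push_neg at hc
  apply hne
  set p1 := μ.re.toJordanDecomposition.posPart
  set p2 := μ.re.toJordanDecomposition.negPart
  set p3 := μ.im.toJordanDecomposition.posPart
  set p4 := μ.im.toJordanDecomposition.negPart
  have key : ∀ n : ℤ,
      ((∫ x, fourier n x ∂p1) - ∫ x, fourier n x ∂p2) +
        Complex.I * ((∫ x, fourier n x ∂p3) - ∫ x, fourier n x ∂p4) = 0 := by
    intro n
    have := hc n
    unfold cmFourierCoeff cmIntegral at this
    field_simp at this
    convert this using 2
    norm_num
  have hconj : ∀ (q : Measure Circle2) (n : ℤ),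
      ∫ x, fourier (-n) x ∂q = starRingEnd ℂ (∫ x, fourier n x ∂q) := by
    intro q n
    rw [← integral_conj]
    congr 1
    ext x
    rw [← fourier_neg]
  have hzero : ∀ n : ℤ, ((∫ x, fourier n x ∂p1) - ∫ x, fourier n x ∂p2) = 0 ∧
      ((∫ x, fourier n x ∂p3) - ∫ x, fourier n x ∂p4) = 0 := by
    intro n
    have h1 := key n
    have h2 := key (-n)
    rw [hconj p1, hconj p2, hconj p3, hconj p4, ← map_sub, ← map_sub] at h2
    set z := (∫ x, fourier n x ∂p1) - ∫ x, fourier n x ∂p2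
    set w := (∫ x, fourier n x ∂p3) - ∫ x, fourier n x ∂p4
    have h2' : z - Complex.I * w = 0 := by
      have := congrArg (starRingEnd ℂ) h2
      simpa [map_add, map_mul, Complex.conj_conj, Complex.conj_I, neg_mul, sub_eq_add_neg] using this
    constructor
    · have : (2 : ℂ) * z = 0 := by linear_combination h1 + h2'
      simpa using this
    · have : (2 : ℂ) * (Complex.I * w) = 0 := by linear_combination h1 - h2'
      simpa [Complex.I_ne_zero] using this
  have h12 : p1 = p2 := measure_eq_of_fourier fun n => sub_eq_zero.mp (hzero n).1
  have h34 : p3 = p4 := measure_eq_of_fourier fun n => sub_eq_zero.mp (hzero n).2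
  have hre : ∀ i : Set Circle2, MeasurableSet i → μ.re i = 0 := by
    intro i hi
    conv_lhs => rw [← μ.re.toSignedMeasure_toJordanDecomposition, JordanDecomposition.toSignedMeasure]
    rw [MeasureTheory.VectorMeasure.sub_apply,
      Measure.toSignedMeasure_apply_measurable hi, Measure.toSignedMeasure_apply_measurable hi]
    rw [show p1.real i = p2.real i from by rw [h12]]
    ring
  have him : ∀ i : Set Circle2, MeasurableSet i → μ.im i = 0 := by
    intro i hi
    conv_lhs => rw [← μ.im.toSignedMeasure_toJordanDecomposition, JordanDecomposition.toSignedMeasure]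
    rw [MeasureTheory.VectorMeasure.sub_apply,
      Measure.toSignedMeasure_apply_measurable hi, Measure.toSignedMeasure_apply_measurable hi]
    rw [show p3.real i = p4.real i from by rw [h34]]
    ring
  ext i hi
  have : μ i = ⟨μ.re i, μ.im i⟩ := rfl
  rw [this, hre i hi, him i hi]
  simp [Complex.ext_iff]

lemma exp_two_mul_I_sub_one (z : ℂ) :
    Complex.exp (2 * z * Complex.I) - 1 = Complex.exp (z * Complex.I) *
      (2 * Complex.sin z * Complex.I) := by
  have e1 := Complex.exp_mul_I (2 * z)
  have e2 := Complex.exp_mul_I z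
  have e3 := Complex.sin_two_mul z
  have e4 := Complex.cos_two_mul z
  have e5 := Complex.sin_sq_add_cos_sq z
  have I2 := Complex.I_sq
  linear_combination e1 - (2*Complex.sin z*Complex.I)*e2 + Complex.I * e3 + e4 + 2*e5 +
    (-2*Complex.sin z^2) * I2

lemma norm_exp_I_sub_one (t : ℝ) : ‖Complex.exp (t * Complex.I) - 1‖ ≤ |t| := by
  have h0 : ((t : ℂ)) * Complex.I = 2 * ((t/2 : ℝ) : ℂ) * Complex.I := by push_cast; ring
  rw [h0, exp_two_mul_I_sub_one, norm_mul, Complex.norm_exp_ofReal_mul_I, one_mul,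
    ← Complex.ofReal_sin]
  rw [norm_mul, norm_mul, Complex.norm_I, mul_one, Complex.norm_real, Real.norm_eq_abs]
  calc ‖(2:ℂ)‖ * |Real.sin (t/2)| = 2 * |Real.sin (t/2)| := by norm_num
    _ ≤ 2 * |t/2| := by
        have := Real.abs_sin_le_abs (x := t/2)
        linarith
    _ = |t| := by rw [abs_div]; norm_num; rw [mul_div_cancel₀]; norm_num

lemma fourier_grid_eq_one {N : ℕ} (hN : 0 < N) {y : Circle2} (hy : y ∈ grid N) :
    (fourier (N : ℤ) y : ℂ) = 1 := by
  obtain ⟨k, rfl⟩ := hy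
  rw [fourier_coe_apply]
  have hN' : (N : ℂ) ≠ 0 := by exact_mod_cast Nat.cast_ne_zero.mpr hN.ne'
  convert Complex.exp_int_mul_two_pi_mul_I k using 2
  push_cast
  field_simp

lemma fourier_norm_one (n : ℤ) (x : Circle2) : ‖(fourier n x : ℂ)‖ = 1 := by
  simp only [fourier_apply, norm_eq_of_mem_sphere, Circle.norm_coe]

lemma fourier_lipschitz (N : ℕ) (x y : Circle2) :
    ‖(fourier (N : ℤ) x : ℂ) - fourier (N : ℤ) y‖ ≤ Real.pi * N * dist x y := by
  induction x using QuotientAddGroup.induction_on with | H a =>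
  induction y using QuotientAddGroup.induction_on with | H b =>
  obtain ⟨r, hr⟩ : ∃ r : ℝ, r = a - b - round ((2:ℝ)⁻¹ * (a - b)) * 2 := ⟨_, rfl⟩
  have hdist : dist ((a : Circle2)) ((b : Circle2)) = |r| := by
    rw [dist_eq_norm, show (a : Circle2) - (b : Circle2) = ((a - b : ℝ) : Circle2) from
      (AddCircle.coe_sub _ a b).symm, hr]
    exact AddCircle.norm_eq _
  have hx : (a : Circle2) = ((b + r : ℝ) : Circle2) := by
    have h0 : ((a - (b + r) : ℝ) : Circle2) = 0 := by
      rw [AddCircle.coe_eq_zero_iff]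
      exact ⟨round ((2:ℝ)⁻¹ * (a - b)), by rw [hr, zsmul_eq_mul]; push_cast; ring⟩
    have h2 := sub_eq_zero.mp (by rwa [AddCircle.coe_sub] at h0)
    rw [h2]
  have e : (fourier (N : ℤ) ((b + r : ℝ) : Circle2) : ℂ)
      = (fourier (N : ℤ) ((b : ℝ) : Circle2) : ℂ) *
        Complex.exp (((Real.pi * N * r : ℝ) : ℂ) * Complex.I) := by
    rw [fourier_coe_apply, fourier_coe_apply, ← Complex.exp_add]
    congr 1
    push_cast
    ring
  rw [hdist, hx, e]
  calc ‖(fourier (N : ℤ) ((b:ℝ) : Circle2) : ℂ) * Complex.exp (((Real.pi * N * r : ℝ):ℂ) * Complex.I)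
        - (fourier (N : ℤ) ((b:ℝ) : Circle2) : ℂ)‖
      = ‖(fourier (N : ℤ) ((b:ℝ) : Circle2) : ℂ)‖ *
        ‖Complex.exp (((Real.pi * N * r : ℝ):ℂ) * Complex.I) - 1‖ := by
        rw [← norm_mul, mul_sub, mul_one]
    _ ≤ |Real.pi * N * r| := by
        rw [fourier_norm_one, one_mul]
        exact norm_exp_I_sub_one _
    _ = Real.pi * N * |r| := by
        rw [abs_mul, abs_of_nonneg (by positivity : (0:ℝ) ≤ Real.pi * N)]

lemma fourier_sub_one_bound {N : ℕ} (hN : 0 < N) {δ : ℝ} {x : Circle2}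
    (hx : x ∈ nbhdGrid N δ) :
    ‖(fourier (N : ℤ) x : ℂ) - 1‖ ≤ Real.pi * N / (2 * (N : ℝ) ^ ((1 : ℝ) + δ)) := by
  have hgrid_ne : (grid N).Nonempty := ⟨((2 * (0:ℤ) / N : ℝ) : Circle2), ⟨0, rfl⟩⟩
  have key : ∀ ε > 0, ‖(fourier (N : ℤ) x : ℂ) - 1‖
      ≤ Real.pi * N / (2 * (N : ℝ) ^ ((1 : ℝ) + δ)) + Real.pi * N * ε := by
    intro ε hε
    have hlt : Metric.infDist x (grid N) < 1 / (2 * (N : ℝ) ^ ((1 : ℝ) + δ)) + ε :=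
      lt_of_le_of_lt hx (by linarith)
    obtain ⟨y, hy, hdy⟩ := (Metric.infDist_lt_iff hgrid_ne).mp hlt
    calc ‖(fourier (N : ℤ) x : ℂ) - 1‖ = ‖(fourier (N : ℤ) x : ℂ) - fourier (N : ℤ) y‖ := by
          rw [fourier_grid_eq_one hN hy]
      _ ≤ Real.pi * N * dist x y := fourier_lipschitz N x y
      _ ≤ Real.pi * N * (1 / (2 * (N : ℝ) ^ ((1 : ℝ) + δ)) + ε) := by
          apply mul_le_mul_of_nonneg_left (le_of_lt hdy) (by positivity)
      _ = Real.pi * N / (2 * (N : ℝ) ^ ((1 : ℝ) + δ)) + Real.pi * N * ε := by ring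
  by_contra hcon
  push_neg at hcon
  set c := ‖(fourier (N : ℤ) x : ℂ) - 1‖ - Real.pi * N / (2 * (N : ℝ) ^ ((1 : ℝ) + δ)) with hc
  have hc0 : 0 < c := by simpa [hc, sub_pos] using hcon
  have := key (c / (2 * Real.pi * N)) (by positivity)
  have hπN : Real.pi * N * (c / (2 * Real.pi * N)) = c / 2 := by
    field_simp
  rw [hπN] at this
  simp only [hc] at this
  linarith

def cmMass (μ : ComplexMeasure Circle2) : ℝ :=
  (μ.re.toJordanDecomposition.posPart Set.univ).toReal +
  (μ.re.toJordanDecomposition.negPart Set.univ).toReal +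
  (μ.im.toJordanDecomposition.posPart Set.univ).toReal +
  (μ.im.toJordanDecomposition.negPart Set.univ).toReal

lemma fourier_shift_diff (k : ℤ) {s : ℤ} {N : ℕ} (hs : s = N ∨ s = -N) (x : Circle2) :
    ‖(fourier (k + s) x : ℂ) - fourier k x‖ = ‖(fourier (N : ℤ) x : ℂ) - 1‖ := by
  rcases hs with rfl | rfl
  · rw [fourier_add]
    calc ‖(fourier k x : ℂ) * fourier (N:ℤ) x - fourier k x‖
        = ‖(fourier k x : ℂ)‖ * ‖(fourier (N:ℤ) x : ℂ) - 1‖ := by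
          rw [← norm_mul, mul_sub, mul_one]
      _ = ‖(fourier (N:ℤ) x : ℂ) - 1‖ := by rw [fourier_norm_one, one_mul]
  · have h : (fourier k x : ℂ) = fourier (k + -(N:ℤ)) x * fourier (N:ℤ) x := by
      rw [← fourier_add]; norm_num
    rw [h]
    calc ‖(fourier (k + -(N:ℤ)) x : ℂ) - fourier (k + -(N:ℤ)) x * fourier (N:ℤ) x‖
        = ‖(fourier (k + -(N:ℤ)) x : ℂ)‖ * ‖1 - (fourier (N:ℤ) x : ℂ)‖ := by
          rw [← norm_mul, mul_sub, mul_one]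
      _ = ‖(fourier (N:ℤ) x : ℂ) - 1‖ := by rw [fourier_norm_one, one_mul, norm_sub_rev]

lemma part_null {μ : ComplexMeasure Circle2} {E : Set Circle2} (hconc : ConcentratedOn μ E) :
    μ.re.toJordanDecomposition.posPart Eᶜ = 0 ∧ μ.re.toJordanDecomposition.negPart Eᶜ = 0 ∧
    μ.im.toJordanDecomposition.posPart Eᶜ = 0 ∧ μ.im.toJordanDecomposition.negPart Eᶜ = 0 := by
  have h := hconc
  unfold ConcentratedOn cmVariation SignedMeasure.totalVariation at h
  rw [Measure.add_apply, Measure.add_apply, Measure.add_apply] at h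
  repeat' constructor
  all_goals
    simp only [add_eq_zero] at h
    tauto

lemma integral_bound_conc {p : Measure Circle2} [IsFiniteMeasure p] {E : Set Circle2}
    (hp : p Eᶜ = 0) {g : Circle2 → ℂ} (hg : Continuous g) {C : ℝ} (hC : 0 ≤ C)
    (hbound : ∀ x ∈ E, ‖g x‖ ≤ C) : ‖∫ x, g x ∂p‖ ≤ C * (p Set.univ).toReal := by
  apply norm_integral_le_of_norm_le_const
  have : ∀ᵐ x ∂p, x ∈ E := by
    rw [ae_iff]
    exact hp
  filter_upwards [this] with x hx
  exact hbound x hx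

lemma cmFourierCoeff_shift_bound (μ : ComplexMeasure Circle2) {E : Set Circle2}
    (hconc : ConcentratedOn μ E) {δ : ℝ} {N : ℕ} (hN : 0 < N) (hE : E ⊆ nbhdGrid N δ)
    (k : ℤ) {s : ℤ} (hs : s = N ∨ s = -N) :
    ‖cmFourierCoeff μ (k + s) - cmFourierCoeff μ k‖
      ≤ cmMass μ * (Real.pi * N / (2 * (N : ℝ) ^ ((1 : ℝ) + δ))) := by
  obtain ⟨h1, h2, h3, h4⟩ := part_null hconc
  set C : ℝ := Real.pi * N / (2 * (N : ℝ) ^ ((1 : ℝ) + δ)) with hCdef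
  have hC : 0 ≤ C := by positivity
  set g : Circle2 → ℂ := fun x => (fourier (k + s) x : ℂ) - fourier k x with hgdef
  have hgc : Continuous g := ((fourier (k+s)).continuous).sub ((fourier k).continuous)
  have hgb : ∀ x ∈ E, ‖g x‖ ≤ C := fun x hx => by
    rw [hgdef]
    simp only
    rw [fourier_shift_diff k hs x]
    exact fourier_sub_one_bound hN (hE hx)
  have key : ∀ (p : Measure Circle2) [IsFiniteMeasure p], p Eᶜ = 0 →
      ((∫ x, fourier (k+s) x ∂p) - ∫ x, fourier k x ∂p) = ∫ x, g x ∂p := by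
    intro p _ hp
    rw [hgdef, integral_sub (cont_integrable p (fourier (k+s)).continuous)
      (cont_integrable p (fourier k).continuous)]
  have hdiff : cmFourierCoeff μ (k + s) - cmFourierCoeff μ k
      = (1/2 : ℂ) * (((∫ x, g x ∂μ.re.toJordanDecomposition.posPart) -
          ∫ x, g x ∂μ.re.toJordanDecomposition.negPart) +
        Complex.I * ((∫ x, g x ∂μ.im.toJordanDecomposition.posPart) -
          ∫ x, g x ∂μ.im.toJordanDecomposition.negPart)) := by
    unfold cmFourierCoeff cmIntegral
    rw [← key _ h1, ← key _ h2, ← key _ h3, ← key _ h4]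
    ring
  rw [hdiff, norm_mul]
  have b1 := integral_bound_conc h1 hgc hC hgb
  have b2 := integral_bound_conc h2 hgc hC hgb
  have b3 := integral_bound_conc h3 hgc hC hgb
  have b4 := integral_bound_conc h4 hgc hC hgb
  have t1 := (norm_sub_le (∫ x, g x ∂μ.re.toJordanDecomposition.posPart)
    (∫ x, g x ∂μ.re.toJordanDecomposition.negPart)).trans (add_le_add b1 b2)
  have t2 := (norm_sub_le (∫ x, g x ∂μ.im.toJordanDecomposition.posPart)
    (∫ x, g x ∂μ.im.toJordanDecomposition.negPart)).trans (add_le_add b3 b4)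
  have hin : ‖((∫ x, g x ∂μ.re.toJordanDecomposition.posPart) -
          ∫ x, g x ∂μ.re.toJordanDecomposition.negPart) +
        Complex.I * ((∫ x, g x ∂μ.im.toJordanDecomposition.posPart) -
          ∫ x, g x ∂μ.im.toJordanDecomposition.negPart)‖
      ≤ ‖(∫ x, g x ∂μ.re.toJordanDecomposition.posPart) -
          ∫ x, g x ∂μ.re.toJordanDecomposition.negPart‖ +
        ‖(∫ x, g x ∂μ.im.toJordanDecomposition.posPart) -
          ∫ x, g x ∂μ.im.toJordanDecomposition.negPart‖ :=
    (norm_add_le _ _).trans (by rw [norm_mul, Complex.norm_I, one_mul])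
  have hhalf : ‖(1/2 : ℂ)‖ ≤ 1 := by norm_num
  calc ‖(1/2 : ℂ)‖ * ‖((∫ x, g x ∂μ.re.toJordanDecomposition.posPart) -
          ∫ x, g x ∂μ.re.toJordanDecomposition.negPart) +
        Complex.I * ((∫ x, g x ∂μ.im.toJordanDecomposition.posPart) -
          ∫ x, g x ∂μ.im.toJordanDecomposition.negPart)‖
      ≤ 1 * ((C * ((μ.re.toJordanDecomposition.posPart Set.univ).toReal) +
          C * ((μ.re.toJordanDecomposition.negPart Set.univ).toReal)) +
        (C * ((μ.im.toJordanDecomposition.posPart Set.univ).toReal) +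
          C * ((μ.im.toJordanDecomposition.negPart Set.univ).toReal))) :=
        _root_.mul_le_mul hhalf (hin.trans (add_le_add t1 t2)) (norm_nonneg _) one_pos.le
    _ = cmMass μ * C := by unfold cmMass; ring

end Aux

/-- If `E ⊆ A(N_j, δ)` for all `j`, then for every nonzero complex measure
concentrated on `E` there are `m` and a strictly increasing sequence of positive
integers `(n_j)` (a subsequence of `(N_j)`) with `m + Ω((n_j)) ⊆ supp(μ̂)`. -/
theorem exists_shift_omega_subset_fourierSupport (δ : ℝ) (hδ : 0 < δ) (N : ℕ → ℕ)
    (hmono : StrictMono N) (hpos : ∀ j, 0 < N j) (E : Set Circle2)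
    (hsub : ∀ j, E ⊆ nbhdGrid (N j) δ) (μ : ComplexMeasure Circle2)
    (hconc : ConcentratedOn μ E) (hne : μ ≠ 0) :
    ∃ (m : ℤ) (n : ℕ → ℤ), StrictMono n ∧ (∀ j, 0 < n j) ∧
      (∃ φ : ℕ → ℕ, StrictMono φ ∧ ∀ j, n j = N (φ j)) ∧
      (fun k => m + k) '' Omega n ⊆ fourierSupport μ := by
  obtain ⟨m, hm⟩ := exists_fourier_ne_zero hne
  set c := ‖cmFourierCoeff μ m‖ with hc
  have hc0 : 0 < c := norm_pos_iff.mpr hm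
  set B : ℕ → ℝ := fun i => cmMass μ * (Real.pi * N i / (2 * (N i : ℝ) ^ ((1 : ℝ) + δ))) with hB
  have hNtop : Tendsto (fun i => (N i : ℝ)) atTop atTop :=
    tendsto_natCast_atTop_atTop.comp hmono.tendsto_atTop
  have hBeq : ∀ᶠ i in atTop, B i = (cmMass μ * (Real.pi / 2)) * (N i : ℝ) ^ (-δ) := by
    filter_upwards with i
    have hNi : (0:ℝ) < N i := by exact_mod_cast hpos i
    rw [hB]
    simp only
    rw [show ((1:ℝ) + δ) = 1 + δ from rfl, Real.rpow_add hNi, Real.rpow_one,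
      Real.rpow_neg hNi.le]
    field_simp
  have hB0 : Tendsto B atTop (nhds 0) := by
    rw [Filter.tendsto_congr' hBeq]
    have := (tendsto_rpow_neg_atTop hδ).comp hNtop
    simpa using this.const_mul (cmMass μ * (Real.pi / 2))
  have hEx : ∀ j : ℕ, ∀ᶠ i in atTop, B i < c / 4 * (1 / 2) ^ j := by
    intro j
    exact hB0.eventually (gt_mem_nhds (by positivity))
  obtain ⟨φ, hφmono, hφ⟩ := Filter.extraction_forall_of_eventually hEx
  refine ⟨m, fun j => (N (φ j) : ℤ), ?_, ?_, ⟨φ, hφmono, fun j => rfl⟩, ?_⟩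
  · intro a b hab
    simp only
    exact_mod_cast hmono (hφmono hab)
  · intro j
    simp only
    exact_mod_cast hpos (φ j)
  rintro - ⟨k, ⟨F, ε, hε, rfl⟩, rfl⟩
  have htel : ∀ F : Finset ℕ,
      ‖cmFourierCoeff μ (m + ∑ j ∈ F, ε j * (N (φ j) : ℤ)) - cmFourierCoeff μ m‖
        ≤ ∑ j ∈ F, c / 4 * (1 / 2) ^ j := by
    intro F
    induction F using Finset.induction_on with
    | empty => simp
    | @insert a F ha ih =>
      rw [Finset.sum_insert ha, Finset.sum_insert ha]
      have hstep : ‖cmFourierCoeff μ (m + (ε a * (N (φ a) : ℤ) + ∑ j ∈ F, ε j * (N (φ j) : ℤ)))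
          - cmFourierCoeff μ (m + ∑ j ∈ F, ε j * (N (φ j) : ℤ))‖ ≤ c / 4 * (1 / 2) ^ a := by
        rcases hε a with h | h | h
        · have := cmFourierCoeff_shift_bound μ hconc (hpos (φ a)) (hsub (φ a))
            (m + ∑ j ∈ F, ε j * (N (φ j) : ℤ)) (Or.inr rfl : (-(N (φ a)):ℤ) = _ ∨ _)
          rw [show m + (ε a * (N (φ a) : ℤ) + ∑ j ∈ F, ε j * (N (φ j) : ℤ))
            = (m + ∑ j ∈ F, ε j * (N (φ j) : ℤ)) + -(N (φ a) : ℤ) by rw [h]; ring]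
          exact this.trans (hφ a).le
        · rw [h]
          simp
          positivity
        · have := cmFourierCoeff_shift_bound μ hconc (hpos (φ a)) (hsub (φ a))
            (m + ∑ j ∈ F, ε j * (N (φ j) : ℤ)) (Or.inl rfl : ((N (φ a)):ℤ) = _ ∨ _)
          rw [show m + (ε a * (N (φ a) : ℤ) + ∑ j ∈ F, ε j * (N (φ j) : ℤ))
            = (m + ∑ j ∈ F, ε j * (N (φ j) : ℤ)) + (N (φ a) : ℤ) by rw [h]; ring]
          exact this.trans (hφ a).le
      calc ‖cmFourierCoeff μ (m + (ε a * (N (φ a) : ℤ) + ∑ j ∈ F, ε j * (N (φ j) : ℤ)))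
            - cmFourierCoeff μ m‖
          ≤ ‖cmFourierCoeff μ (m + (ε a * (N (φ a) : ℤ) + ∑ j ∈ F, ε j * (N (φ j) : ℤ)))
            - cmFourierCoeff μ (m + ∑ j ∈ F, ε j * (N (φ j) : ℤ))‖
            + ‖cmFourierCoeff μ (m + ∑ j ∈ F, ε j * (N (φ j) : ℤ)) - cmFourierCoeff μ m‖ := by
            exact norm_sub_le_norm_sub_add_norm_sub _ _ _
        _ ≤ c / 4 * (1 / 2) ^ a + ∑ j ∈ F, c / 4 * (1 / 2) ^ j := add_le_add hstep ih
  have hsum : ∑ j ∈ F, c / 4 * (1 / 2 : ℝ) ^ j ≤ c / 2 := by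
    have hsub' : F ⊆ Finset.range (F.sup id + 1) := fun j hj =>
      Finset.mem_range.mpr (Nat.lt_succ_of_le (Finset.le_sup (f := id) hj))
    calc ∑ j ∈ F, c / 4 * (1 / 2 : ℝ) ^ j
        ≤ ∑ j ∈ Finset.range (F.sup id + 1), c / 4 * (1 / 2 : ℝ) ^ j :=
          Finset.sum_le_sum_of_subset_of_nonneg hsub' (fun j _ _ => by positivity)
      _ = c / 4 * ∑ j ∈ Finset.range (F.sup id + 1), (1 / 2 : ℝ) ^ j := by
          rw [Finset.mul_sum]
      _ ≤ c / 4 * 2 := by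
          apply mul_le_mul_of_nonneg_left (sum_geometric_two_le _) (by positivity)
      _ = c / 2 := by ring
  have hfinal := (htel F).trans hsum
  intro h0
  simp only at h0
  rw [h0, zero_sub, norm_neg, ← hc] at hfinal
  linarith


end
end

section
/- Let N be a positive integer, δ > 0, and let μ be a finite complex measure on 𝕋 concentrated on A(N, δ). Then for every integer n and every sign ε ∈ {−1, +1}, |μ̂(n + εN) − μ̂(n)| ≤ ‖μ‖·π/N^δ, where ‖μ‖ is the total variation norm of μ. -/
open MeasureTheory Filter Metric Set

noncomputable section

section Aux

open Real

lemma aux_abs_exp_I_sub_one (θ : ℝ) : ‖Complex.exp (θ * Complex.I) - 1‖ ≤ |θ| := by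
  have hz : Complex.exp (θ * Complex.I) - 1 =
      Complex.mk (Real.cos θ - 1) (Real.sin θ) := by
    rw [Complex.exp_mul_I]
    apply Complex.ext <;> simp [Complex.cos_ofReal_re, Complex.sin_ofReal_re]
  have h1 : (‖Complex.exp (θ * Complex.I) - 1‖)^2 = (Real.cos θ - 1)^2 + (Real.sin θ)^2 := by
    rw [hz, Complex.sq_norm, Complex.normSq_mk]; ring
  have hcos : Real.cos θ = 1 - 2 * Real.sin (θ/2)^2 := by
    have h2 := Real.cos_two_mul (θ/2)
    have h3 := Real.sin_sq_add_cos_sq (θ/2)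
    have : 2 * (θ/2) = θ := by ring
    rw [this] at h2
    nlinarith
  have hsin : Real.sin (θ/2)^2 ≤ (θ/2)^2 := by
    rw [← sq_abs (Real.sin (θ/2)), ← sq_abs (θ/2)]
    exact pow_le_pow_left₀ (abs_nonneg _) (Real.abs_sin_le_abs) 2
  have hs := Real.sin_sq_add_cos_sq θ
  have hsq : (‖Complex.exp (θ * Complex.I) - 1‖)^2 ≤ |θ|^2 := by
    rw [sq_abs]; nlinarith
  calc ‖Complex.exp (θ * Complex.I) - 1‖
      = Real.sqrt ((‖Complex.exp (θ * Complex.I) - 1‖)^2) :=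
        (Real.sqrt_sq (norm_nonneg _)).symm
    _ ≤ Real.sqrt (|θ|^2) := Real.sqrt_le_sqrt hsq
    _ = |θ| := Real.sqrt_sq (abs_nonneg θ)

lemma aux_abs_fourier_sub_fourier (m : ℤ) (x y : Circle2) :
    ‖fourier m x - fourier m y‖ ≤ π * |(m : ℝ)| * dist x y := by
  induction x using QuotientAddGroup.induction_on with | H a => ?_
  induction y using QuotientAddGroup.induction_on with | H b => ?_
  set k : ℤ := round ((2:ℝ)⁻¹ * (a - b)) with hk
  set c : ℝ := a - b - k * 2 with hcdef
  have hdist : dist ((a : ℝ) : Circle2) ((b : ℝ) : Circle2) = |c| := by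
    rw [dist_eq_norm, ← QuotientAddGroup.mk_sub, AddCircle.norm_eq]
  have hc : (a:ℝ) = b + c + k * 2 := by rw [hcdef]; ring
  have h1 : (fourier m ((b : ℝ) : Circle2) : ℂ) =
      Complex.exp (((π * m * b : ℝ) : ℂ) * Complex.I) := by
    rw [fourier_coe_apply]; congr 1; push_cast; ring
  have h2 : (fourier m ((a : ℝ) : Circle2) : ℂ) =
      Complex.exp (((π * m * b : ℝ) : ℂ) * Complex.I) *
        Complex.exp (((π * m * c : ℝ) : ℂ) * Complex.I) := by
    rw [fourier_coe_apply, ← Complex.exp_add]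
    rw [show ((π * m * b : ℝ) : ℂ) * Complex.I + ((π * m * c : ℝ) : ℂ) * Complex.I
        = 2 * (π:ℂ) * Complex.I * m * a / ((2:ℝ):ℂ) - (m * k) * (2 * π * Complex.I) by
      push_cast [hc]; ring]
    rw [Complex.exp_sub]
    rw [show (m:ℂ) * (k:ℂ) * (2 * ↑π * Complex.I) = ((m * k : ℤ) : ℂ) * (2 * ↑π * Complex.I) by
      push_cast; ring]
    rw [Complex.exp_int_mul_two_pi_mul_I, div_one]
  rw [h1, h2]
  rw [show Complex.exp (((π * m * b : ℝ) : ℂ) * Complex.I) *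
        Complex.exp (((π * m * c : ℝ) : ℂ) * Complex.I) -
      Complex.exp (((π * m * b : ℝ) : ℂ) * Complex.I)
      = Complex.exp (((π * m * b : ℝ) : ℂ) * Complex.I) *
        (Complex.exp (((π * m * c : ℝ) : ℂ) * Complex.I) - 1) by ring]
  rw [norm_mul, Complex.norm_exp_ofReal_mul_I, one_mul, hdist]
  calc ‖Complex.exp (((π * m * c : ℝ):ℂ) * Complex.I) - 1‖ ≤ |π * m * c| :=
        aux_abs_exp_I_sub_one _
    _ = π * |(m:ℝ)| * |c| := by rw [abs_mul, abs_mul, abs_of_nonneg Real.pi_pos.le]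

lemma aux_grid_nonempty (N : ℕ) : (grid N).Nonempty :=
  ⟨_, ⟨0, rfl⟩⟩

lemma aux_fourier_eq_one_on_grid (N : ℕ) (hN : 0 < N) (ε : ℤ) {y : Circle2} (hy : y ∈ grid N) :
    (fourier (ε * N) y : ℂ) = 1 := by
  obtain ⟨j, rfl⟩ := hy
  rw [fourier_coe_apply]
  rw [show (2 * (π:ℂ) * Complex.I * (ε * (N:ℤ) : ℤ) * ((2 * j / N : ℝ) : ℂ) / ((2:ℝ):ℂ))
      = ((ε * j : ℤ) : ℂ) * (2 * π * Complex.I) by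
    have hN2 : (N:ℂ) ≠ 0 := Nat.cast_ne_zero.mpr hN.ne'
    push_cast
    field_simp]
  exact Complex.exp_int_mul_two_pi_mul_I _

lemma aux_abs_fourier_sub_one_le (N : ℕ) (hN : 0 < N) (ε : ℤ) (hε : ε = 1 ∨ ε = -1)
    (x : Circle2) :
    ‖fourier (ε * N) x - 1‖ ≤ π * N * Metric.infDist x (grid N) := by
  have habs : |((ε * N : ℤ) : ℝ)| = (N : ℝ) := by
    rcases hε with h | h <;> simp [h]
  by_contra hcon
  push_neg at hcon
  have hπN : (0:ℝ) < π * N := by positivity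
  have h2 : Metric.infDist x (grid N) < ‖fourier (ε * N) x - 1‖ / (π * N) := by
    rw [lt_div_iff₀ hπN]
    calc Metric.infDist x (grid N) * (π * N) = π * N * Metric.infDist x (grid N) := by ring
      _ < _ := hcon
  obtain ⟨y, hy, hxy⟩ := (Metric.infDist_lt_iff (aux_grid_nonempty N)).mp h2
  have hlip := aux_abs_fourier_sub_fourier (ε * N) x y
  rw [aux_fourier_eq_one_on_grid N hN ε hy, habs] at hlip
  have : ‖fourier (ε * N) x - 1‖ < ‖fourier (ε * N) x - 1‖ := by
    calc ‖fourier (ε * N) x - 1‖ ≤ π * N * dist x y := hlip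
      _ < π * N * (‖fourier (ε * N) x - 1‖ / (π * N)) :=
          (mul_lt_mul_iff_right₀ hπN).mpr hxy
      _ = ‖fourier (ε * N) x - 1‖ := by field_simp
  exact absurd this (lt_irrefl _)

lemma aux_abs_g_le (N : ℕ) (hN : 0 < N) (δ : ℝ) (n ε : ℤ) (hε : ε = 1 ∨ ε = -1)
    {x : Circle2} (hx : x ∈ nbhdGrid N δ) :
    ‖fourier (n + ε * N) x - fourier n x‖ ≤ π / (2 * (N:ℝ) ^ δ) := by
  have h1 : (fourier (n + ε * N) x : ℂ) - fourier n x
      = fourier n x * (fourier (ε * N) x - 1) := by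
    rw [fourier_add]; ring
  rw [h1, norm_mul]
  have h2 : ‖fourier n x‖ = 1 := Circle.norm_coe _
  rw [h2, one_mul]
  calc ‖fourier (ε * N) x - 1‖ ≤ π * N * Metric.infDist x (grid N) :=
        aux_abs_fourier_sub_one_le N hN ε hε x
    _ ≤ π * N * (1 / (2 * (N : ℝ) ^ ((1 : ℝ) + δ))) :=
        mul_le_mul_of_nonneg_left hx (by positivity)
    _ = π / (2 * (N:ℝ) ^ δ) := by
        rw [Real.rpow_add (by exact_mod_cast hN), Real.rpow_one]
        have hNδ : (0:ℝ) < (N:ℝ) ^ δ := Real.rpow_pos_of_pos (by exact_mod_cast hN) δ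
        field_simp

instance aux_fin_tv (s : SignedMeasure Circle2) : IsFiniteMeasure s.totalVariation := by
  unfold SignedMeasure.totalVariation; infer_instance

instance aux_fin_var (μ : ComplexMeasure Circle2) : IsFiniteMeasure (cmVariation μ) := by
  unfold cmVariation; infer_instance

lemma aux_sm_apply_eq (s : SignedMeasure Circle2) {B : Set Circle2} (hB : MeasurableSet B) :
    s B = (s.toJordanDecomposition.posPart B).toReal
      - (s.toJordanDecomposition.negPart B).toReal := by
  conv_lhs => rw [← s.toSignedMeasure_toJordanDecomposition,
    MeasureTheory.JordanDecomposition.toSignedMeasure]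
  exact Measure.toSignedMeasure_sub_apply hB

lemma aux_abs_sm_le_totalVariation (s : SignedMeasure Circle2) {B : Set Circle2}
    (hB : MeasurableSet B) : |s B| ≤ (s.totalVariation B).toReal := by
  rw [aux_sm_apply_eq s hB, SignedMeasure.totalVariation, Measure.add_apply,
    ENNReal.toReal_add (measure_ne_top _ _) (measure_ne_top _ _)]
  have h1 := ENNReal.toReal_nonneg (a := s.toJordanDecomposition.posPart B)
  have h2 := ENNReal.toReal_nonneg (a := s.toJordanDecomposition.negPart B)
  rw [abs_sub_le_iff]
  constructor <;> linarith

lemma aux_abs_cm_le_variation (μ : ComplexMeasure Circle2) {B : Set Circle2}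
    (hB : MeasurableSet B) : ‖μ B‖ ≤ (cmVariation μ B).toReal := by
  have h1 : (μ B).re = μ.re B := rfl
  have h2 : (μ B).im = μ.im B := rfl
  calc ‖μ B‖ ≤ |(μ B).re| + |(μ B).im| := Complex.norm_le_abs_re_add_abs_im _
    _ ≤ (μ.re.totalVariation B).toReal + (μ.im.totalVariation B).toReal := by
        rw [h1, h2]
        exact add_le_add (aux_abs_sm_le_totalVariation _ hB)
          (aux_abs_sm_le_totalVariation _ hB)
    _ = (cmVariation μ B).toReal := by
        rw [cmVariation, Measure.add_apply,
          ENNReal.toReal_add (measure_ne_top _ _) (measure_ne_top _ _)]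

lemma aux_cmNorm_bddAbove (μ : ComplexMeasure Circle2) :
    BddAbove {r : ℝ | ∃ (n : ℕ) (B : Fin n → Set Circle2), (∀ i, MeasurableSet (B i)) ∧
      (∀ i j, i ≠ j → Disjoint (B i) (B j)) ∧ r = ∑ i, ‖μ (B i)‖} := by
  refine ⟨(cmVariation μ Set.univ).toReal, ?_⟩
  rintro r ⟨n, B, hmeas, hdisj, rfl⟩
  calc ∑ i, ‖μ (B i)‖ ≤ ∑ i, (cmVariation μ (B i)).toReal :=
        Finset.sum_le_sum fun i _ => aux_abs_cm_le_variation μ (hmeas i)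
    _ = (∑ i, cmVariation μ (B i)).toReal :=
        (ENNReal.toReal_sum fun i _ => measure_ne_top _ _).symm
    _ ≤ (cmVariation μ Set.univ).toReal := by
        apply ENNReal.toReal_mono (measure_ne_top _ _)
        rw [← measure_biUnion_finset (fun i _ j _ hij => hdisj i j hij)
          (fun i _ => hmeas i)]
        exact measure_mono (Set.subset_univ _)

lemma aux_abs_cm_le_cmNorm (μ : ComplexMeasure Circle2) {B : Set Circle2}
    (hB : MeasurableSet B) : ‖μ B‖ ≤ cmNorm μ := by
  apply le_csSup (aux_cmNorm_bddAbove μ)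
  exact ⟨1, fun _ => B, fun _ => hB, fun i j hij => absurd (Subsingleton.elim i j) hij,
    by simp⟩

lemma aux_totalVariation_le (μ : ComplexMeasure Circle2) (s : SignedMeasure Circle2)
    (hs : ∀ B, MeasurableSet B → |s B| ≤ ‖μ B‖) :
    (s.totalVariation Set.univ).toReal ≤ 2 * cmNorm μ := by
  obtain ⟨S, hSm, hS1, hS2⟩ := s.toJordanDecomposition.mutuallySingular
  have hpos : (s.toJordanDecomposition.posPart Set.univ).toReal ≤ cmNorm μ := by
    have h1 : s.toJordanDecomposition.posPart Set.univ
        = s.toJordanDecomposition.posPart Sᶜ := by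
      rw [← measure_add_measure_compl hSm, hS1, zero_add]
    have h2 : s Sᶜ = (s.toJordanDecomposition.posPart Sᶜ).toReal := by
      rw [aux_sm_apply_eq s hSm.compl, hS2, ENNReal.toReal_zero, sub_zero]
    calc (s.toJordanDecomposition.posPart Set.univ).toReal
        = s Sᶜ := by rw [h1, h2]
      _ ≤ |s Sᶜ| := le_abs_self _
      _ ≤ ‖μ Sᶜ‖ := hs _ hSm.compl
      _ ≤ cmNorm μ := aux_abs_cm_le_cmNorm μ hSm.compl
  have hneg : (s.toJordanDecomposition.negPart Set.univ).toReal ≤ cmNorm μ := by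
    have h1 : s.toJordanDecomposition.negPart Set.univ
        = s.toJordanDecomposition.negPart S := by
      rw [← measure_add_measure_compl hSm, hS2, add_zero]
    have h2 : s S = (s.toJordanDecomposition.posPart S).toReal
        - (s.toJordanDecomposition.negPart S).toReal := aux_sm_apply_eq s hSm
    rw [hS1] at h2
    simp only [ENNReal.toReal_zero, zero_sub] at h2
    calc (s.toJordanDecomposition.negPart Set.univ).toReal
        = -(s S) := by rw [h1, h2, neg_neg]
      _ ≤ |s S| := neg_le_abs _
      _ ≤ ‖μ S‖ := hs _ hSm
      _ ≤ cmNorm μ := aux_abs_cm_le_cmNorm μ hSm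
  rw [SignedMeasure.totalVariation, Measure.add_apply,
    ENNReal.toReal_add (measure_ne_top _ _) (measure_ne_top _ _)]
  linarith

lemma aux_cmVariation_le (μ : ComplexMeasure Circle2) :
    (cmVariation μ Set.univ).toReal ≤ 4 * cmNorm μ := by
  have hre := aux_totalVariation_le μ μ.re (fun B _ => Complex.abs_re_le_norm (μ B))
  have him := aux_totalVariation_le μ μ.im (fun B _ => Complex.abs_im_le_norm (μ B))
  rw [cmVariation, Measure.add_apply,
    ENNReal.toReal_add (measure_ne_top _ _) (measure_ne_top _ _)]
  linarith

lemma aux_fourier_integrable (m : ℤ) (ν : Measure Circle2) [IsFiniteMeasure ν] :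
    Integrable (fun x => (fourier m x : ℂ)) ν := by
  apply Continuous.integrable_of_hasCompactSupport (map_continuous (fourier m))
  exact IsCompact.of_isClosed_subset isCompact_univ (isClosed_tsupport _) (Set.subset_univ _)

lemma aux_cmIntegral_fourier_sub (μ : ComplexMeasure Circle2) (m n : ℤ) :
    cmFourierCoeff μ m - cmFourierCoeff μ n =
      (1 / 2 : ℂ) * cmIntegral μ (fun x => fourier m x - fourier n x) := by
  unfold cmFourierCoeff cmIntegral
  rw [integral_sub (aux_fourier_integrable m _) (aux_fourier_integrable n _),
    integral_sub (aux_fourier_integrable m _) (aux_fourier_integrable n _),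
    integral_sub (aux_fourier_integrable m _) (aux_fourier_integrable n _),
    integral_sub (aux_fourier_integrable m _) (aux_fourier_integrable n _)]
  ring

lemma aux_norm_integral_le_of_null_compl {ν : Measure Circle2} [IsFiniteMeasure ν]
    {S : Set Circle2} (hν : ν Sᶜ = 0) {f : Circle2 → ℂ} {C : ℝ}
    (hf : ∀ x ∈ S, ‖f x‖ ≤ C) :
    ‖∫ x, f x ∂ν‖ ≤ C * (ν Set.univ).toReal := by
  apply norm_integral_le_of_norm_le_const
  rw [ae_iff]
  apply measure_mono_null _ hν
  intro x hx
  simp only [Set.mem_setOf_eq, not_le] at hx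
  intro hxS
  exact absurd (hf x hxS) (not_le.mpr hx)

lemma aux_abs_sub (a b : ℂ) : ‖a - b‖ ≤ ‖a‖ + ‖b‖ := by
  exact norm_sub_le a b

end Aux

/-- If `μ` is concentrated on `A(N, δ)`, then for every `n` and sign `ε = ±1`,
`|μ̂(n + εN) - μ̂(n)| ≤ ‖μ‖·π/N^δ`. -/
theorem abs_fourierCoeff_shift_sub_le (N : ℕ) (hN : 0 < N) (δ : ℝ) (hδ : 0 < δ)
    (μ : ComplexMeasure Circle2) (hconc : ConcentratedOn μ (nbhdGrid N δ))
    (n : ℤ) (ε : ℤ) (hε : ε = 1 ∨ ε = -1) :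
    ‖cmFourierCoeff μ (n + ε * N) - cmFourierCoeff μ n‖ ≤
      cmNorm μ * Real.pi / (N : ℝ) ^ δ := by
  classical
  set S := nbhdGrid N δ with hS
  set C : ℝ := Real.pi / (2 * (N:ℝ) ^ δ) with hCdef
  have hNR : (0:ℝ) < (N:ℝ) := by exact_mod_cast hN
  have hNδ : (0:ℝ) < (N:ℝ) ^ δ := Real.rpow_pos_of_pos hNR δ
  have hC : 0 ≤ C := by positivity
  set J1 := μ.re.toJordanDecomposition.posPart with hJ1
  set J2 := μ.re.toJordanDecomposition.negPart with hJ2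
  set J3 := μ.im.toJordanDecomposition.posPart with hJ3
  set J4 := μ.im.toJordanDecomposition.negPart with hJ4
  -- null sets
  have hvar : ∀ B : Set Circle2, cmVariation μ B = J1 B + J2 B + (J3 B + J4 B) := by
    intro B
    rw [cmVariation, Measure.add_apply, SignedMeasure.totalVariation,
      SignedMeasure.totalVariation, Measure.add_apply, Measure.add_apply]
  have hnull : J1 Sᶜ = 0 ∧ J2 Sᶜ = 0 ∧ J3 Sᶜ = 0 ∧ J4 Sᶜ = 0 := by
    have h0 : cmVariation μ Sᶜ = 0 := hconc
    rw [hvar Sᶜ, add_eq_zero, add_eq_zero, add_eq_zero] at h0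
    exact ⟨h0.1.1, h0.1.2, h0.2.1, h0.2.2⟩
  -- pointwise bound
  set g : Circle2 → ℂ := fun x => fourier (n + ε * N) x - fourier n x with hg
  have hgb : ∀ x ∈ S, ‖g x‖ ≤ C := fun x hx =>
    aux_abs_g_le N hN δ n ε hε hx
  -- integral bounds
  have hb1 : ‖∫ x, g x ∂J1‖ ≤ C * (J1 Set.univ).toReal :=
    aux_norm_integral_le_of_null_compl hnull.1 hgb
  have hb2 : ‖∫ x, g x ∂J2‖ ≤ C * (J2 Set.univ).toReal :=
    aux_norm_integral_le_of_null_compl hnull.2.1 hgb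
  have hb3 : ‖∫ x, g x ∂J3‖ ≤ C * (J3 Set.univ).toReal :=
    aux_norm_integral_le_of_null_compl hnull.2.2.1 hgb
  have hb4 : ‖∫ x, g x ∂J4‖ ≤ C * (J4 Set.univ).toReal :=
    aux_norm_integral_le_of_null_compl hnull.2.2.2 hgb
  -- total
  have hV : (J1 Set.univ).toReal + (J2 Set.univ).toReal + (J3 Set.univ).toReal
      + (J4 Set.univ).toReal = (cmVariation μ Set.univ).toReal := by
    rw [hvar Set.univ,
      ENNReal.toReal_add (ENNReal.add_ne_top.mpr ⟨measure_ne_top _ _, measure_ne_top _ _⟩)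
        (ENNReal.add_ne_top.mpr ⟨measure_ne_top _ _, measure_ne_top _ _⟩),
      ENNReal.toReal_add (measure_ne_top _ _) (measure_ne_top _ _),
      ENNReal.toReal_add (measure_ne_top _ _) (measure_ne_top _ _)]
    ring
  have hcmI : ‖cmIntegral μ g‖ ≤ C * (cmVariation μ Set.univ).toReal := by
    rw [cmIntegral]
    calc ‖((∫ x, g x ∂J1) - ∫ x, g x ∂J2) +
          Complex.I * ((∫ x, g x ∂J3) - ∫ x, g x ∂J4)‖
        ≤ ‖(∫ x, g x ∂J1) - ∫ x, g x ∂J2‖ +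
          ‖Complex.I * ((∫ x, g x ∂J3) - ∫ x, g x ∂J4)‖ :=
          norm_add_le _ _
      _ ≤ (‖∫ x, g x ∂J1‖ + ‖∫ x, g x ∂J2‖) +
          (‖∫ x, g x ∂J3‖ + ‖∫ x, g x ∂J4‖) := by
          rw [norm_mul, Complex.norm_I, one_mul]
          exact add_le_add (aux_abs_sub _ _) (aux_abs_sub _ _)
      _ ≤ C * (J1 Set.univ).toReal + C * (J2 Set.univ).toReal +
          (C * (J3 Set.univ).toReal + C * (J4 Set.univ).toReal) := by
          exact add_le_add (add_le_add hb1 hb2) (add_le_add hb3 hb4)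
      _ = C * ((J1 Set.univ).toReal + (J2 Set.univ).toReal + (J3 Set.univ).toReal
          + (J4 Set.univ).toReal) := by ring
      _ = C * (cmVariation μ Set.univ).toReal := by rw [hV]
  have hmain := aux_cmIntegral_fourier_sub μ (n + ε * N) n
  rw [hmain, norm_mul]
  have habs12 : ‖(1/2 : ℂ)‖ = 1/2 := by
    rw [show (1/2 : ℂ) = ((1/2 : ℝ) : ℂ) by norm_num, Complex.norm_real]
    norm_num
  rw [habs12]
  calc (1/2 : ℝ) * ‖cmIntegral μ g‖
      ≤ (1/2) * (C * (cmVariation μ Set.univ).toReal) := by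
        apply mul_le_mul_of_nonneg_left hcmI (by norm_num)
    _ ≤ (1/2) * (C * (4 * cmNorm μ)) := by
        apply mul_le_mul_of_nonneg_left (mul_le_mul_of_nonneg_left
          (aux_cmVariation_le μ) hC) (by norm_num)
    _ = cmNorm μ * Real.pi / (N : ℝ) ^ δ := by
        rw [hCdef]
        field_simp
        ring



end
end

section
/- For every α ∈ (0,1), setting δ = 1 − α, there exist a strictly increasing sequence (N_j)_{j≥1} of positive integers and a closed set E ⊆ 𝕋 with E ⊆ A(N_j, δ) for every j, such that for every s ∈ (0, α) there exist a constant c_s > 0 and a probability measure μ on 𝕋 concentrated on E satisfying μ(I) ≤ c_s·|I|^s for every arc (interval) I ⊆ 𝕋 of length |I|. -/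
open MeasureTheory Filter Metric Set

noncomputable section

namespace FrostAux
open scoped Classical

open Classical in
/-- end of the forced block starting at position `k` -/
noncomputable def P (α : ℝ) (k : ℕ) : ℕ := ⌈(2 - α) * k⌉₊ + 1

noncomputable def m (α : ℝ) : ℕ → ℕ
  | 0 => 1
  | (j+1) => ⌈((P α (m α j) : ℝ) + 2) / (1 - α)^2⌉₊ + P α (m α j) + 1

noncomputable def p (α : ℝ) (j : ℕ) : ℕ := P α (m α j)

def Free (α : ℝ) (i : ℕ) : Prop := ∀ j, ¬ (m α j ≤ i ∧ i < p α j)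

open Classical in
noncomputable def f (α : ℝ) (n : ℕ) : ℕ :=
  ((Finset.range n).filter (fun i => Free α i)).card

variable {α : ℝ} (hα : α ∈ Set.Ioo (0:ℝ) 1)

section Seq
include hα

lemma le_P (k : ℕ) : (2 - α) * k + 1 ≤ (P α k : ℝ) := by
  have := Nat.le_ceil ((2 - α) * k)
  have : ((⌈(2 - α) * k⌉₊ : ℝ)) ≥ (2-α) * k := this
  simp only [P]
  push_cast
  linarith

lemma P_le (k : ℕ) : (P α k : ℝ) ≤ (2 - α) * k + 2 := by
  have h0 : (0:ℝ) ≤ (2 - α) * k := by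
    have h2 : (0:ℝ) ≤ 2 - α := by linarith [hα.2]
    exact mul_nonneg h2 (Nat.cast_nonneg k)
  have := Nat.ceil_lt_add_one h0
  simp only [P]
  push_cast
  linarith

lemma lt_P (k : ℕ) : k < P α k := by
  have h1 := le_P hα k
  have : (k : ℝ) + 1 ≤ (P α k : ℝ) := by nlinarith [hα.2, Nat.cast_nonneg (α := ℝ) k]
  exact_mod_cast Nat.cast_lt.mp (by linarith : (k:ℝ) < P α k)

lemma m_lt_p (j : ℕ) : m α j < p α j := lt_P hα (m α j)

lemma p_lt_m_succ (j : ℕ) : p α j < m α (j+1) := by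
  show p α j < ⌈((P α (m α j) : ℝ) + 2) / (1 - α)^2⌉₊ + P α (m α j) + 1
  have : p α j = P α (m α j) := rfl
  omega

lemma m_strictMono : StrictMono (m α) :=
  strictMono_nat_of_lt_succ fun j => (m_lt_p hα j).trans (p_lt_m_succ hα j)

lemma m_ge (j : ℕ) : j + 1 ≤ m α j := by
  induction j with
  | zero => simp [m]
  | succ j ih =>
    have h := m_strictMono hα (Nat.lt_succ_self j)
    simp only [Nat.succ_eq_add_one] at *
    omega

lemma P_mono {k l : ℕ} (h : k ≤ l) : P α k ≤ P α l := by
  have h2 : (0:ℝ) ≤ 2 - α := by linarith [hα.2]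
  have : (2 - α) * k ≤ (2 - α) * l := by
    have : (k:ℝ) ≤ l := by exact_mod_cast h
    nlinarith
  exact Nat.add_le_add_right (Nat.ceil_le_ceil this) 1

lemma p_mono {j k : ℕ} (h : j ≤ k) : p α j ≤ p α k :=
  P_mono hα (((m_strictMono hα).monotone h))

lemma m_succ_ge (j : ℕ) : (p α j : ℝ) + 2 ≤ (1 - α)^2 * (m α (j+1)) := by
  have h1 : (0:ℝ) < (1 - α)^2 := by
    have h := hα.2
    have : (0:ℝ) < 1 - α := by linarith
    exact pow_pos this 2
  have h2 : ((p α j : ℝ) + 2) / (1 - α)^2 ≤ (⌈((P α (m α j) : ℝ) + 2) / (1 - α)^2⌉₊ : ℝ) :=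
    Nat.le_ceil _
  have h3 : (⌈((P α (m α j) : ℝ) + 2) / (1 - α)^2⌉₊ : ℝ) ≤ m α (j+1) := by
    have : ⌈((P α (m α j) : ℝ) + 2) / (1 - α)^2⌉₊ ≤ m α (j+1) := by
      show _ ≤ ⌈((P α (m α j) : ℝ) + 2) / (1 - α)^2⌉₊ + P α (m α j) + 1
      omega
    exact_mod_cast this
  calc (p α j : ℝ) + 2 = (1-α)^2 * (((p α j : ℝ) + 2) / (1 - α)^2) := by
        field_simp
        exact (div_self (sub_ne_zero.2 (ne_of_gt hα.2))).symm
    _ ≤ (1-α)^2 * (m α (j+1)) := by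
        have := h2.trans h3
        nlinarith

lemma free_of_between {i j : ℕ} (h1 : p α j ≤ i) (h2 : i < m α (j+1)) : Free α i := by
  intro k hk
  rcases le_or_gt k j with h | h
  · exact absurd hk.2 (not_lt.2 ((p_mono hα h).trans h1))
  · exact absurd hk.1 (not_le.2 (lt_of_lt_of_le h2 ((m_strictMono hα).monotone h)))

lemma free_of_lt_m0 {i : ℕ} (h : i < m α 0) : Free α i := fun k hk =>
  absurd hk.1 (not_le.2 (lt_of_lt_of_le h ((m_strictMono hα).monotone (Nat.zero_le k))))

end Seq

lemma f_le (α : ℝ) (n : ℕ) : f α n ≤ n := by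
  classical
  simpa [f] using (Finset.card_filter_le (Finset.range n) _)

lemma f_mono (α : ℝ) : Monotone (f α) := by
  classical
  intro a b h
  exact Finset.card_le_card (Finset.filter_subset_filter _ (by simpa using Finset.range_subset_range.2 h))

lemma f_succ_of_free {α : ℝ} {n : ℕ} (h : Free α n) : f α (n+1) = f α n + 1 := by
  classical
  simp only [f, Finset.range_add_one]
  rw [Finset.filter_insert, if_pos h, Finset.card_insert_of_notMem (by simp)]

lemma f_succ_of_not_free {α : ℝ} {n : ℕ} (h : ¬ Free α n) : f α (n+1) = f α n := by
  classical
  simp only [f, Finset.range_add_one]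
  rw [Finset.filter_insert, if_neg h]

lemma f_add_of_free {α : ℝ} (a : ℕ) : ∀ d : ℕ, (∀ i, a ≤ i → i < a + d → Free α i) →
    f α (a + d) = f α a + d := by
  intro d
  induction d with
  | zero => simp
  | succ d ih =>
    intro h
    have h1 : f α (a + d) = f α a + d := ih (fun i h1 h2 => h i h1 (by omega))
    have h2 : Free α (a + d) := h _ (by omega) (by omega)
    have : a + (d+1) = (a+d) + 1 := by omega
    rw [this, f_succ_of_free h2, h1]
    omega

section Count
include hα

lemma f_ge_aux : ∀ j, ∀ n, n ≤ p α j → α * n - p α 0 ≤ (f α n : ℝ) := by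
  intro j
  induction j with
  | zero =>
    intro n hn
    have h1 : (n:ℝ) ≤ p α 0 := by exact_mod_cast hn
    have h2 : α * n ≤ (n:ℝ) := by nlinarith [hα.1, hα.2, Nat.cast_nonneg (α := ℝ) n]
    have h3 : (0:ℝ) ≤ f α n := Nat.cast_nonneg _
    linarith
  | succ j ih =>
    intro n hn
    rcases le_or_gt n (p α j) with h | h
    · exact ih n h
    rcases le_or_gt n (m α (j+1)) with h2 | h2
    · -- p j < n ≤ m (j+1) : all of [p j, n) is free
      have key : f α n = f α (p α j) + (n - p α j) := by
        have := f_add_of_free (α := α) (p α j) (n - p α j)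
          (fun i hi1 hi2 => free_of_between hα hi1 (by omega))
        rw [Nat.add_sub_cancel' h.le] at this
        exact this
      have ihp := ih (p α j) le_rfl
      have hcast : (f α n : ℝ) = (f α (p α j) : ℝ) + ((n:ℝ) - (p α j : ℝ)) := by
        rw [key]; push_cast [Nat.cast_sub h.le]; ring
      have hle : α * (n:ℝ) - α * (p α j : ℝ) ≤ (n:ℝ) - (p α j : ℝ) := by
        have h1 : (p α j : ℝ) ≤ (n:ℝ) := by exact_mod_cast h.le
        nlinarith [hα.1, hα.2]
      linarith
    · -- m (j+1) < n ≤ p (j+1)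
      have key : (m α (j+1) : ℝ) - p α j ≤ f α n := by
        have h3 : f α (m α (j+1)) = f α (p α j) + (m α (j+1) - p α j) := by
          have := f_add_of_free (α := α) (p α j) (m α (j+1) - p α j)
            (fun i hi1 hi2 => free_of_between hα hi1 (by omega))
          rw [Nat.add_sub_cancel' (p_lt_m_succ hα j).le] at this
          exact this
        have h4 : f α (m α (j+1)) ≤ f α n := f_mono α (by omega)
        have h5 : m α (j+1) - p α j ≤ f α n := by omega
        have := (p_lt_m_succ hα j).le
        calc (m α (j+1) : ℝ) - p α j = ((m α (j+1) - p α j : ℕ) : ℝ) := by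
              push_cast [Nat.cast_sub this]; ring
          _ ≤ f α n := by exact_mod_cast h5
      have hP := P_le hα (m α (j+1))
      have hm := m_succ_ge hα j
      have hn' : (n:ℝ) ≤ (p α (j+1) : ℝ) := by exact_mod_cast hn
      have hp' : (p α (j+1) : ℝ) = (P α (m α (j+1)) : ℝ) := rfl
      have h0 : (0:ℝ) ≤ (p α 0 : ℝ) := Nat.cast_nonneg _
      nlinarith [hα.1, hα.2, Nat.cast_nonneg (α := ℝ) (m α (j+1))]

lemma p_zero_le : (p α 0 : ℝ) ≤ 3 := by
  have h1 : p α 0 = ⌈(2 - α) * (1:ℕ)⌉₊ + 1 := by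
    simp [p, P, m]
  have h2 : ⌈(2 - α) * (1:ℕ)⌉₊ ≤ 2 := by
    apply Nat.ceil_le.2
    push_cast
    nlinarith [hα.1]
  have : p α 0 ≤ 3 := by omega
  exact_mod_cast this

lemma f_ge (n : ℕ) : α * n - 3 ≤ (f α n : ℝ) := by
  have h1 : n ≤ p α n := le_of_lt (lt_of_lt_of_le (by have := m_ge hα n; omega : n < m α n) (m_lt_p hα n).le)
  have := f_ge_aux hα n n h1
  have := p_zero_le hα
  linarith

end Count

section Digits

noncomputable def e (i : ℕ) (x : ℝ) : ℤ := ⌊x * 4^(i+1)⌋ - 4 * ⌊x * 4^i⌋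

noncomputable def w (α : ℝ) (i : ℕ) (x : ℝ) : ℝ :=
  (if Free α i then ((e i x : ℝ)) else 0) * (4:ℝ)⁻¹^(i+1)

noncomputable def g (α : ℝ) (x : ℝ) : ℝ := ∑' i, w α i x

noncomputable def sPart (α : ℝ) (n : ℕ) (x : ℝ) : ℝ := ∑ i ∈ Finset.range n, w α i x

lemma e_nonneg (i : ℕ) (x : ℝ) : 0 ≤ e i x := by
  have h1 : (4:ℝ) * ⌊x * 4^i⌋ ≤ x * 4^(i+1) := by
    have := Int.floor_le (x * 4^i)
    have h2 : x * 4^(i+1) = (x * 4^i) * 4 := by ring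
    nlinarith
  have := Int.le_floor.2 (by exact_mod_cast h1 : ((4 * ⌊x * 4^i⌋ : ℤ) : ℝ) ≤ x * 4^(i+1))
  simp only [e]
  omega

lemma e_le_three (i : ℕ) (x : ℝ) : e i x ≤ 3 := by
  have h1 : x * 4^(i+1) < 4 * ⌊x * 4^i⌋ + 4 := by
    have := Int.lt_floor_add_one (x * 4^i)
    have h2 : x * 4^(i+1) = (x * 4^i) * 4 := by ring
    nlinarith
  have := Int.floor_lt.2 (by exact_mod_cast h1 : x * 4^(i+1) < ((4 * ⌊x * 4^i⌋ + 4 : ℤ) : ℝ))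
  simp only [e]
  omega

lemma w_nonneg (α : ℝ) (i : ℕ) (x : ℝ) : 0 ≤ w α i x := by
  apply mul_nonneg
  · split
    · exact_mod_cast e_nonneg i x
    · exact le_refl 0
  · positivity

lemma w_le (α : ℝ) (i : ℕ) (x : ℝ) : w α i x ≤ 3 * (4:ℝ)⁻¹^(i+1) := by
  apply mul_le_mul_of_nonneg_right _ (by positivity)
  split
  · exact_mod_cast e_le_three i x
  · norm_num

lemma summable_w (α : ℝ) (x : ℝ) : Summable (fun i => w α i x) := by
  apply Summable.of_nonneg_of_le (w_nonneg α · x) (w_le α · x)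
  simp only [pow_succ]
  exact ((summable_geometric_of_lt_one (by norm_num) (by norm_num)).mul_right _).mul_left 3

set_option maxHeartbeats 1000000 in
lemma tail_bound (α : ℝ) (n : ℕ) (x : ℝ) :
    sPart α n x ≤ g α x ∧ g α x ≤ sPart α n x + (4:ℝ)⁻¹^n := by
  have hs := summable_w α x
  have hsplit := Summable.sum_add_tsum_nat_add n hs
  have htail_nonneg : 0 ≤ ∑' i, w α (i + n) x :=
    tsum_nonneg (fun i => w_nonneg α _ x)
  have htail_le : ∑' i, w α (i + n) x ≤ (4:ℝ)⁻¹^n := by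
    have hb : Summable (fun i : ℕ => 3 * (4:ℝ)⁻¹^(i + n + 1)) := by
      simp only [pow_succ, pow_add]
      apply Summable.mul_left
      apply Summable.mul_right
      apply Summable.mul_right
      exact summable_geometric_of_lt_one (by norm_num) (by norm_num)
    have := Summable.tsum_le_tsum (fun i => w_le α (i+n) x) ((summable_nat_add_iff n).2 hs) hb
    refine this.trans ?_
    have : ∑' i : ℕ, 3 * (4:ℝ)⁻¹^(i + n + 1) = (3 * (4:ℝ)⁻¹^(n+1)) * ∑' i : ℕ, (4:ℝ)⁻¹^i := by
      rw [← tsum_mul_left]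
      congr 1
      ext i
      rw [show i + n + 1 = i + (n+1) by omega, pow_add]
      ring
    rw [this, tsum_geometric_of_lt_one (by norm_num) (by norm_num), pow_succ]
    ring_nf
    norm_num
  have hg : g α x = ∑' i, w α i x := rfl
  have hsp : sPart α n x = ∑ i ∈ Finset.range n, w α i x := rfl
  constructor
  · rw [hg, hsp]; linarith
  · rw [hg, hsp]; linarith

lemma g_mem (α : ℝ) (x : ℝ) : g α x ∈ Set.Icc (0:ℝ) 1 := by
  have h := tail_bound α 0 x
  simp only [sPart, Finset.range_zero, Finset.sum_empty, pow_zero] at h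
  exact ⟨h.1, by linarith [h.2]⟩

end Digits

section SfunSec

noncomputable def Sfun (α : ℝ) : ℕ → ℕ → ℝ
  | 0, _ => 0
  | (n+1), c => Sfun α n (c / 4) + (if Free α n then ((c % 4 : ℕ) : ℝ) else 0) * (4:ℝ)⁻¹^(n+1)

noncomputable def pre (n : ℕ) (x : ℝ) : ℕ := (⌊x * 4^n⌋).toNat

lemma pre_succ {x : ℝ} (hx : 0 ≤ x) (n : ℕ) :
    pre (n+1) x = 4 * pre n x + (e n x).toNat := by
  have h0 : (0:ℤ) ≤ ⌊x * 4^n⌋ := Int.floor_nonneg.2 (by positivity)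
  have h1 : (0:ℤ) ≤ ⌊x * 4^(n+1)⌋ := Int.floor_nonneg.2 (by positivity)
  have he := e_nonneg n x
  have key : ⌊x * 4^(n+1)⌋ = 4 * ⌊x * 4^n⌋ + e n x := by simp [e]
  simp only [pre]
  omega

lemma sPart_eq_Sfun (α : ℝ) {x : ℝ} (hx : 0 ≤ x) : ∀ n, sPart α n x = Sfun α n (pre n x) := by
  intro n
  induction n with
  | zero => simp [sPart, Sfun]
  | succ n ih =>
    have hlt : (e n x).toNat < 4 := by
      have := e_le_three n x; have := e_nonneg n x; omega
    rw [sPart, Finset.sum_range_succ, ← sPart]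
    rw [pre_succ hx n]
    show _ = Sfun α (n+1) _
    simp only [Sfun]
    rw [Nat.mul_add_div (by norm_num), Nat.mul_add_mod]
    rw [Nat.div_eq_of_lt hlt, Nat.mod_eq_of_lt hlt, Nat.add_zero, ih]
    congr 1
    simp only [w]
    congr 1
    split
    · exact_mod_cast (Int.toNat_of_nonneg (e_nonneg n x)).symm
    · rfl

lemma Sfun_int (α : ℝ) : ∀ n c, ∃ K : ℤ, Sfun α n c = (K : ℝ) * (4:ℝ)⁻¹^n := by
  intro n
  induction n with
  | zero => intro c; exact ⟨0, by simp [Sfun]⟩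
  | succ n ih =>
    intro c
    obtain ⟨K, hK⟩ := ih (c / 4)
    have hmod : ((c % 4 : ℕ) : ℤ) = (c : ℤ) % 4 := by omega
    refine ⟨4 * K + (if Free α n then ((c % 4 : ℕ) : ℤ) else 0), ?_⟩
    simp only [Sfun, hK]
    split
    · simp only [Int.cast_add, Int.cast_mul, Int.cast_ofNat, Int.cast_natCast, pow_succ]
      ring
    · simp only [Int.cast_add, Int.cast_mul, Int.cast_ofNat, Int.cast_natCast, pow_succ,
        add_zero, Int.cast_zero]
      ring

end SfunSec

section Counting

lemma card_Sfun_le (α : ℝ) : ∀ n (v : ℝ),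
    ((Finset.range (4^n)).filter (fun c => Sfun α n c = v)).card ≤ 4^(n - f α n) := by
  intro n
  induction n with
  | zero =>
    intro v
    calc ((Finset.range (4^0)).filter (fun c => Sfun α 0 c = v)).card
        ≤ (Finset.range (4^0)).card := Finset.card_filter_le _ _
      _ ≤ 4^(0 - f α 0) := by simp
  | succ n ih =>
    intro v
    set A := (Finset.range (4^(n+1))).filter (fun c => Sfun α (n+1) c = v) with hA
    have hdiv : ∀ c, c ∈ Finset.range (4^(n+1)) → c / 4 ∈ Finset.range (4^n) := by
      intro c hc
      simp only [Finset.mem_range] at hc ⊢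
      have : (4:ℕ)^(n+1) = 4^n * 4 := pow_succ 4 n
      omega
    by_cases hfree : Free α n
    · rcases Finset.eq_empty_or_nonempty A with he | ⟨c₀, hc₀⟩
      · rw [he]; simp
      obtain ⟨hc₀r, hc₀v⟩ := Finset.mem_filter.1 hc₀
      have key : ∀ c ∈ A, c % 4 = c₀ % 4 ∧ Sfun α n (c / 4) = Sfun α n (c₀ / 4) := by
        intro c hc
        obtain ⟨hcr, hcv⟩ := Finset.mem_filter.1 hc
        obtain ⟨K, hK⟩ := Sfun_int α n (c / 4)
        obtain ⟨K₀, hK₀⟩ := Sfun_int α n (c₀ / 4)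
        have h1 : Sfun α (n+1) c = v := hcv
        have h2 : Sfun α (n+1) c₀ = v := hc₀v
        simp only [Sfun, if_pos hfree] at h1 h2
        have he1 : (K:ℝ) * (4:ℝ)⁻¹^n + ((c % 4 : ℕ):ℝ) * (4:ℝ)⁻¹^(n+1)
            = (K₀:ℝ) * (4:ℝ)⁻¹^n + ((c₀ % 4 : ℕ):ℝ) * (4:ℝ)⁻¹^(n+1) := by
          rw [← hK, ← hK₀, h1, h2]
        have hq : ((4:ℝ)⁻¹)^(n+1) ≠ 0 := by positivity
        have heq2 : (((K*4 + (c%4:ℕ) : ℤ)):ℝ) * ((4:ℝ)⁻¹)^(n+1)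
            = (((K₀*4 + (c₀%4:ℕ) : ℤ)):ℝ) * ((4:ℝ)⁻¹)^(n+1) := by
          simp only [Int.cast_add, Int.cast_mul, Int.cast_ofNat, Int.cast_natCast]
          linear_combination he1
        have hint : (K*4 + (c%4:ℕ) : ℤ) = (K₀*4 + (c₀%4:ℕ) : ℤ) := by
          exact_mod_cast mul_right_cancel₀ hq heq2
        have hm1 : c % 4 < 4 := Nat.mod_lt _ (by norm_num)
        have hm2 : c₀ % 4 < 4 := Nat.mod_lt _ (by norm_num)
        have : c % 4 = c₀ % 4 ∧ K = K₀ := by omega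
        exact ⟨this.1, by rw [hK, hK₀, this.2]⟩
      have hcard : A.card ≤ ((Finset.range (4^n)).filter
          (fun b => Sfun α n b = Sfun α n (c₀ / 4))).card := by
        apply Finset.card_le_card_of_injOn (fun c => c / 4)
        · intro c hc
          obtain ⟨h1, h2⟩ := key c hc
          exact Finset.mem_filter.2 ⟨hdiv c (Finset.mem_filter.1 hc).1, h2⟩
        · intro c₁ h₁ c₂ h₂ hdiv_eq
          have e1 := (key c₁ (Finset.mem_coe.1 h₁)).1
          have e2 := (key c₂ (Finset.mem_coe.1 h₂)).1
          have e3 : c₁ / 4 = c₂ / 4 := hdiv_eq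
          omega
      have hf : (n+1) - f α (n+1) = n - f α n := by
        have := f_le α n
        rw [f_succ_of_free hfree]
        omega
      rw [hf]
      exact hcard.trans (ih _)
    · have hcard : A.card ≤ 4 * ((Finset.range (4^n)).filter (fun b => Sfun α n b = v)).card := by
        apply Finset.card_le_mul_card_image_of_maps_to (f := fun c => c / 4)
        · intro c hc
          obtain ⟨hcr, hcv⟩ := Finset.mem_filter.1 hc
          have h1 : Sfun α (n+1) c = v := hcv
          simp only [Sfun, if_neg hfree, zero_mul, add_zero] at h1
          exact Finset.mem_filter.2 ⟨hdiv c hcr, h1⟩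
        · intro b hb
          have : (Finset.filter (fun a => a / 4 = b) A).card ≤ (Finset.range 4).card := by
            apply Finset.card_le_card_of_injOn (fun c => c % 4)
            · intro c hc
              simp only [Finset.mem_coe, Finset.mem_range]
              exact Nat.mod_lt _ (by norm_num : (4:ℕ) > 0)
            · intro c₁ h₁ c₂ h₂ hmod_eq
              simp only [Finset.coe_filter, Set.mem_setOf_eq] at h₁ h₂
              have e3 : c₁ % 4 = c₂ % 4 := hmod_eq
              omega
          simpa using this
      have hf : (n+1) - f α (n+1) = (n - f α n) + 1 := by
        have := f_le α n
        rw [f_succ_of_not_free hfree]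
        omega
      rw [hf, pow_succ]
      calc A.card ≤ 4 * ((Finset.range (4^n)).filter (fun b => Sfun α n b = v)).card := hcard
        _ ≤ 4 * 4^(n - f α n) := by
            have := ih v
            omega
        _ = 4^(n - f α n) * 4 := by ring

end Counting

section MeasureBound

lemma vol_sPart_eq_le (α : ℝ) (n : ℕ) (v : ℝ) :
    volume {x ∈ Set.Ico (0:ℝ) 1 | sPart α n x = v}
      ≤ ENNReal.ofReal ((4:ℝ)⁻¹ ^ f α n) := by
  classical
  set H := (Finset.range (4^n)).filter (fun c => Sfun α n c = v) with hH
  have hsub : {x ∈ Set.Ico (0:ℝ) 1 | sPart α n x = v}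
      ⊆ ⋃ c ∈ H, Set.Ico ((c:ℝ) * (4:ℝ)⁻¹^n) (((c:ℝ)+1) * (4:ℝ)⁻¹^n) := by
    rintro x ⟨⟨hx0, hx1⟩, hxv⟩
    have hxn : (0:ℝ) ≤ x * 4^n := by positivity
    have hfl0 : (0:ℤ) ≤ ⌊x * 4^n⌋ := Int.floor_nonneg.2 hxn
    set c := pre n x with hc
    have hcZ : (c:ℤ) = ⌊x * 4^n⌋ := Int.toNat_of_nonneg hfl0
    have hcR : ((c:ℝ)) = ((⌊x * 4^n⌋ : ℤ) : ℝ) := by exact_mod_cast congrArg (fun z : ℤ => (z:ℝ)) hcZ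
    have hfloor_le : ((c:ℝ)) ≤ x * 4^n := by rw [hcR]; exact Int.floor_le _
    have hlt_floor : x * 4^n < (c:ℝ) + 1 := by rw [hcR]; exact Int.lt_floor_add_one _
    have hclt : c < 4^n := by
      have : x * 4^n < 4^n := by
        have h4 : (0:ℝ) < 4^n := by positivity
        nlinarith
      have : ((c:ℝ)) < 4^n := lt_of_le_of_lt hfloor_le this
      exact_mod_cast this
    have hmem : c ∈ H := by
      refine Finset.mem_filter.2 ⟨Finset.mem_range.2 hclt, ?_⟩
      rw [← sPart_eq_Sfun α hx0 n, hxv]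
    apply Set.mem_biUnion hmem
    have h4 : (0:ℝ) < (4:ℝ)^n := by positivity
    have hq : (4:ℝ)⁻¹^n = ((4:ℝ)^n)⁻¹ := by rw [inv_pow]
    constructor
    · rw [hq, ← div_eq_mul_inv, div_le_iff₀ h4]
      linarith
    · rw [hq, ← div_eq_mul_inv, lt_div_iff₀ h4]
      linarith
  calc volume {x ∈ Set.Ico (0:ℝ) 1 | sPart α n x = v}
      ≤ volume (⋃ c ∈ H, Set.Ico ((c:ℝ) * (4:ℝ)⁻¹^n) (((c:ℝ)+1) * (4:ℝ)⁻¹^n)) :=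
        measure_mono hsub
    _ ≤ ∑ c ∈ H, volume (Set.Ico ((c:ℝ) * (4:ℝ)⁻¹^n) (((c:ℝ)+1) * (4:ℝ)⁻¹^n)) :=
        measure_biUnion_finset_le _ _
    _ = ∑ c ∈ H, ENNReal.ofReal ((4:ℝ)⁻¹^n) := by
        apply Finset.sum_congr rfl
        intro c hc
        rw [Real.volume_Ico]
        congr 1
        ring
    _ = H.card * ENNReal.ofReal ((4:ℝ)⁻¹^n) := by
        rw [Finset.sum_const, nsmul_eq_mul]
    _ ≤ (4^(n - f α n) : ℕ) * ENNReal.ofReal ((4:ℝ)⁻¹^n) := by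
        apply mul_le_mul_left
        exact_mod_cast Nat.cast_le.2 (card_Sfun_le α n v)
    _ = ENNReal.ofReal ((4:ℝ)⁻¹ ^ f α n) := by
        rw [← ENNReal.ofReal_natCast, ← ENNReal.ofReal_mul (by positivity)]
        congr 1
        push_cast
        have hfle := f_le α n
        set a := f α n with ha
        set k := n - a with hk
        have hn : n = k + a := by omega
        rw [hn, pow_add, ← mul_assoc, ← mul_pow]
        norm_num

lemma FB (α : ℝ) (n : ℕ) (u v : ℝ) (huv : v ≤ u + (4:ℝ)⁻¹^n) :
    volume {x ∈ Set.Ico (0:ℝ) 1 | g α x ∈ Set.Icc u v}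
      ≤ 3 * ENNReal.ofReal ((4:ℝ)⁻¹ ^ f α n) := by
  classical
  set q := (4:ℝ)⁻¹^n with hqdef
  have hq : (0:ℝ) < q := by positivity
  have hq4 : q * 4^n = 1 := by rw [hqdef, ← mul_pow]; norm_num
  set K₀ : ℤ := ⌈(u - q) * 4^n⌉ with hK₀
  have hsub : {x ∈ Set.Ico (0:ℝ) 1 | g α x ∈ Set.Icc u v}
      ⊆ ⋃ t ∈ Finset.range 3, {x ∈ Set.Ico (0:ℝ) 1 | sPart α n x = ((K₀ + t : ℤ) : ℝ) * q} := by
    rintro x ⟨⟨hx0, hx1⟩, hgu, hgv⟩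
    have htb := tail_bound α n x
    obtain ⟨K, hK⟩ := Sfun_int α n (pre n x)
    have hsp : sPart α n x = (K:ℝ) * q := by rw [sPart_eq_Sfun α hx0 n, hK]
    have hlow : u - q ≤ (K:ℝ) * q := by
      have := htb.2
      rw [hsp] at this
      linarith
    have hhigh : (K:ℝ) * q ≤ v := by
      have := htb.1
      rw [hsp] at this
      linarith
    have hK₀le : K₀ ≤ K := by
      rw [hK₀]
      apply Int.ceil_le.2
      have h4 : (0:ℝ) < (4:ℝ)^n := by positivity
      calc (u - q) * 4^n ≤ ((K:ℝ) * q) * 4^n := by nlinarith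
        _ = (K:ℝ) := by rw [mul_assoc, hq4, mul_one]
    have hKle : K ≤ K₀ + 2 := by
      have hceil : u - q ≤ (K₀:ℝ) * q := by
        have h1 : (u - q) * 4^n ≤ (K₀:ℝ) := Int.le_ceil _
        calc u - q = ((u - q) * 4^n) * q := by rw [mul_assoc, mul_comm ((4:ℝ)^n) q, hq4, mul_one]
          _ ≤ (K₀:ℝ) * q := by nlinarith
      have : (K:ℝ) ≤ (K₀:ℝ) + 2 := by nlinarith
      exact_mod_cast this
    have ht : (K - K₀).toNat ∈ Finset.range 3 := by
      simp only [Finset.mem_range]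
      omega
    apply Set.mem_biUnion ht
    refine ⟨⟨hx0, hx1⟩, ?_⟩
    rw [hsp]
    congr 1
    have : (K₀ + ((K - K₀).toNat : ℤ)) = K := by omega
    rw [this]
  calc volume {x ∈ Set.Ico (0:ℝ) 1 | g α x ∈ Set.Icc u v}
      ≤ volume (⋃ t ∈ Finset.range 3, {x ∈ Set.Ico (0:ℝ) 1 | sPart α n x = ((K₀ + t : ℤ) : ℝ) * q}) :=
        measure_mono hsub
    _ ≤ ∑ t ∈ Finset.range 3, volume {x ∈ Set.Ico (0:ℝ) 1 | sPart α n x = ((K₀ + t : ℤ) : ℝ) * q} :=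
        measure_biUnion_finset_le _ _
    _ ≤ ∑ _t ∈ Finset.range 3, ENNReal.ofReal ((4:ℝ)⁻¹ ^ f α n) :=
        Finset.sum_le_sum (fun t _ => vol_sPart_eq_le α n _)
    _ = 3 * ENNReal.ofReal ((4:ℝ)⁻¹ ^ f α n) := by
        rw [Finset.sum_const, Finset.card_range, nsmul_eq_mul]
        norm_num

end MeasureBound

section MeasurabilitySec

lemma measurable_e (i : ℕ) : Measurable (e i) := by
  apply Measurable.sub
  · exact Int.measurable_floor.comp (measurable_id.mul_const _)
  · exact (Int.measurable_floor.comp (measurable_id.mul_const _)).const_mul 4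

lemma measurable_w (α : ℝ) (i : ℕ) : Measurable (w α i) := by
  unfold w
  apply Measurable.mul _ measurable_const
  by_cases h : Free α i
  · simp only [if_pos h]
    exact measurable_from_top.comp (measurable_e i)
  · simp only [if_neg h]
    exact measurable_const

lemma measurable_sPart (α : ℝ) (n : ℕ) : Measurable (sPart α n) :=
  Finset.measurable_sum _ (fun i _ => measurable_w α i)

lemma measurable_g (α : ℝ) : Measurable (g α) := by
  apply measurable_of_tendsto_metrizable (fun n => measurable_sPart α n)
  rw [tendsto_pi_nhds]
  intro x
  exact (summable_w α x).hasSum.tendsto_sum_nat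

end MeasurabilitySec

section CircleSec

lemma dist_coe_le (a b : ℝ) : dist ((a : ℝ) : Circle2) ((b : ℝ) : Circle2) ≤ |a - b| := by
  rw [dist_eq_norm]
  rw [← AddCircle.coe_sub]
  simpa [Real.norm_eq_abs] using (QuotientAddGroup.norm_mk_le_norm (S := AddSubgroup.zmultiples (2:ℝ)) (m := a - b))

lemma isClosed_nbhdGrid (N : ℕ) (δ : ℝ) : IsClosed (nbhdGrid N δ) := by
  have : nbhdGrid N δ = (fun x => Metric.infDist x (grid N)) ⁻¹' Set.Iic (1 / (2 * (N : ℝ) ^ ((1 : ℝ) + δ))) := rfl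
  rw [this]
  exact IsClosed.preimage (Metric.continuous_infDist_pt _) isClosed_Iic

include hα

lemma mem_nbhdGrid (x : ℝ) (hx : 0 ≤ x) (j : ℕ) :
    ((2 * g α x : ℝ) : Circle2) ∈ nbhdGrid (4 ^ (m α j)) (1 - α) := by
  set n := m α j with hn
  set Pj := p α j with hP
  -- the partial sum at level n is unchanged at level Pj
  have hzero : ∀ i, n ≤ i → i < Pj → w α i x = 0 := by
    intro i h1 h2
    have : ¬ Free α i := fun hF => hF j ⟨h1, h2⟩
    simp [w, this]
  have hsps : sPart α Pj x = sPart α n x := by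
    have hnP : n ≤ Pj := (m_lt_p hα j).le
    have := Finset.sum_Ico_consecutive (fun i => w α i x) (Nat.zero_le n) hnP
    simp only [← Finset.range_eq_Ico] at this
    have hz : ∑ i ∈ Finset.Ico n Pj, w α i x = 0 :=
      Finset.sum_eq_zero (fun i hi => hzero i (Finset.mem_Ico.1 hi).1 (Finset.mem_Ico.1 hi).2)
    simp only [sPart]
    rw [← this, hz, add_zero]
  obtain ⟨K, hK⟩ := Sfun_int α n (pre n x)
  have hsp : sPart α n x = (K:ℝ) * (4:ℝ)⁻¹^n := by rw [sPart_eq_Sfun α hx n, hK]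
  -- the grid point
  have hgridmem : ((2 * (K:ℝ) * (4:ℝ)⁻¹^n : ℝ) : Circle2) ∈ grid (4 ^ n) := by
    refine ⟨K, ?_⟩
    congr 1
    push_cast
    rw [div_eq_mul_inv, inv_pow]
    try ring
  have htb := tail_bound α Pj x
  have hdist : dist ((2 * g α x : ℝ) : Circle2) ((2 * (K:ℝ) * (4:ℝ)⁻¹^n : ℝ) : Circle2)
      ≤ 2 * (4:ℝ)⁻¹^Pj := by
    refine (dist_coe_le _ _).trans ?_
    have h1 : 2 * g α x - 2 * (K:ℝ) * (4:ℝ)⁻¹^n = 2 * (g α x - sPart α Pj x) := by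
      rw [hsps, hsp]; ring
    rw [h1]
    rw [abs_of_nonneg (by linarith [htb.1] : (0:ℝ) ≤ 2 * (g α x - sPart α Pj x))]
    linarith [htb.2]
  have hinf := (Metric.infDist_le_dist_of_mem hgridmem).trans hdist
  -- numerics
  have hfinal : 2 * (4:ℝ)⁻¹^Pj ≤ 1 / (2 * ((4 ^ n : ℕ) : ℝ) ^ ((1 : ℝ) + (1 - α))) := by
    have hcast : ((4 ^ n : ℕ) : ℝ) = (4:ℝ)^n := by push_cast; ring
    have hrpow : ((4:ℝ)^n) ^ ((1 : ℝ) + (1 - α)) = (4:ℝ) ^ ((n:ℝ) * (2 - α)) := by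
      rw [← Real.rpow_natCast (4:ℝ) n, ← Real.rpow_mul (by norm_num)]
      congr 1
      ring
    rw [hcast, hrpow]
    have hPle : (2 - α) * (n:ℝ) + 1 ≤ (Pj:ℝ) := le_P hα n
    have h1 : (4:ℝ) ^ ((n:ℝ) * (2 - α)) * 4 ≤ (4:ℝ) ^ ((Pj:ℝ)) := by
      have : (4:ℝ) ^ ((n:ℝ) * (2 - α)) * 4 = (4:ℝ) ^ ((n:ℝ) * (2 - α) + 1) := by
        rw [Real.rpow_add (by norm_num), Real.rpow_one]
      rw [this]
      apply Real.rpow_le_rpow_of_exponent_le (by norm_num)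
      linarith
    have h2 : (4:ℝ) ^ ((Pj:ℝ)) = (4:ℝ) ^ (Pj:ℕ) := Real.rpow_natCast 4 Pj
    rw [h2] at h1
    have hp1 : (0:ℝ) < (4:ℝ) ^ (Pj:ℕ) := by positivity
    have hp2 : (0:ℝ) < (4:ℝ) ^ ((n:ℝ) * (2 - α)) := Real.rpow_pos_of_pos (by norm_num) _
    rw [inv_pow]
    have hinv : ((4:ℝ)^(Pj:ℕ))⁻¹ ≤ (4 * (4:ℝ) ^ ((n:ℝ)*(2-α)))⁻¹ := by
      apply inv_anti₀ (by positivity)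
      linarith
    calc 2 * ((4:ℝ)^(Pj:ℕ))⁻¹ ≤ 2 * (4 * (4:ℝ) ^ ((n:ℝ)*(2-α)))⁻¹ := by linarith
      _ = 1 / (2 * (4:ℝ) ^ ((n:ℝ)*(2-α))) := by
        rw [eq_div_iff (by positivity)]
        field_simp
        ring
  simp only [nbhdGrid, Set.mem_setOf_eq]
  exact hinf.trans hfinal

end CircleSec

section FinalBounds
include hα

lemma vol_g_eq_zero (u : ℝ) : volume {x ∈ Set.Ico (0:ℝ) 1 | g α x = u} = 0 := by
  have hbound : ∀ k : ℕ, volume {x ∈ Set.Ico (0:ℝ) 1 | g α x = u}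
      ≤ 3 * ENNReal.ofReal ((4:ℝ)⁻¹ ^ k) := by
    intro k
    set n : ℕ := ⌈((k:ℝ) + 3) / α⌉₊ with hn
    have hfk : k ≤ f α n := by
      have h1 : ((k:ℝ) + 3) / α ≤ (n:ℝ) := Nat.le_ceil _
      have h2 : α * n - 3 ≤ (f α n : ℝ) := f_ge hα n
      have hα0 := hα.1
      have h3 : (k:ℝ) + 3 ≤ α * n := by
        calc (k:ℝ) + 3 = α * (((k:ℝ) + 3) / α) := by field_simp
          _ ≤ α * n := by nlinarith
      have : (k:ℝ) ≤ (f α n : ℝ) := by linarith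
      exact_mod_cast this
    have hsub : {x ∈ Set.Ico (0:ℝ) 1 | g α x = u} ⊆ {x ∈ Set.Ico (0:ℝ) 1 | g α x ∈ Set.Icc u u} := by
      rintro x ⟨h1, h2⟩
      exact ⟨h1, by simp [h2]⟩
    have hpow : (0:ℝ) < (4:ℝ)⁻¹ ^ n := by positivity
    refine (measure_mono hsub).trans ((FB α n u u (by linarith)).trans ?_)
    apply mul_le_mul_right
    apply ENNReal.ofReal_le_ofReal
    exact pow_le_pow_of_le_one (by norm_num) (by norm_num) hfk
  have htend : Tendsto (fun k : ℕ => 3 * ENNReal.ofReal ((4:ℝ)⁻¹ ^ k)) atTop (nhds 0) := by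
    have h1 : Tendsto (fun k : ℕ => ((4:ℝ)⁻¹ ^ k)) atTop (nhds 0) :=
      tendsto_pow_atTop_nhds_zero_of_lt_one (by norm_num) (by norm_num)
    have h2 : Tendsto (fun k : ℕ => ENNReal.ofReal ((4:ℝ)⁻¹ ^ k)) atTop (nhds 0) := by
      have := (ENNReal.continuous_ofReal.tendsto 0).comp h1
      rw [ENNReal.ofReal_zero] at this; exact this
    have := ENNReal.Tendsto.const_mul (a := 3) h2 (Or.inr (by norm_num))
    simpa using this
  exact le_antisymm (ge_of_tendsto' htend hbound) zero_le

lemma Icc_bound (u v : ℝ) (h0 : 0 ≤ v - u) (h1 : v - u ≤ 1) :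
    volume {x ∈ Set.Ico (0:ℝ) 1 | g α x ∈ Set.Icc u v}
      ≤ ENNReal.ofReal (768 * (v - u) ^ α) := by
  rcases eq_or_lt_of_le h0 with heq | hlt
  · have hvu : v = u := by linarith
    have hset : {x ∈ Set.Ico (0:ℝ) 1 | g α x ∈ Set.Icc u v} = {x ∈ Set.Ico (0:ℝ) 1 | g α x = u} := by
      rw [hvu]
      ext x
      constructor
      · rintro ⟨h1x, h2x⟩
        exact ⟨h1x, le_antisymm h2x.2 h2x.1⟩
      · rintro ⟨h1x, h2x⟩
        exact ⟨h1x, h2x.ge, h2x.le⟩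
    rw [hset, vol_g_eq_zero hα u]
    exact zero_le
  · have hα0 := hα.1
    have hα1 := hα.2
    set lam := v - u with hlam
    have hex : ∃ n : ℕ, (4:ℝ)⁻¹ ^ n < lam := exists_pow_lt_of_lt_one hlt (by norm_num)
    classical
    set n₀ := Nat.find hex with hn₀
    have hQ : (4:ℝ)⁻¹ ^ n₀ < lam := Nat.find_spec hex
    have hn₀pos : n₀ ≠ 0 := by
      intro h
      rw [h, pow_zero] at hQ
      linarith
    set n := n₀ - 1 with hndef
    have hns : n₀ = n + 1 := by omega
    have hnot : ¬ ((4:ℝ)⁻¹ ^ n < lam) := Nat.find_min hex (by omega)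
    have hlam_le : lam ≤ (4:ℝ)⁻¹ ^ n := not_lt.1 hnot
    have hFB := FB α n u v (by rw [hlam] at hlam_le; linarith)
    refine hFB.trans ?_
    have hfge := f_ge hα n
    have e1 : ((4:ℝ)⁻¹) ^ (f α n) = (4:ℝ) ^ (-(f α n : ℝ)) := by
      rw [inv_pow, ← Real.rpow_natCast (4:ℝ) (f α n), ← Real.rpow_neg (by norm_num)]
    have e2 : (4:ℝ) ^ (-(f α n : ℝ)) ≤ (4:ℝ) ^ ((3:ℝ) - α * n) := by
      apply Real.rpow_le_rpow_of_exponent_le (by norm_num)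
      linarith
    have e3 : (4:ℝ) ^ ((3:ℝ) - α * n) = 64 * ((4:ℝ) ^ (-(n:ℝ))) ^ α := by
      rw [show (3:ℝ) - α * n = 3 + (-(n:ℝ)) * α by ring, Real.rpow_add (by norm_num),
        Real.rpow_mul (by norm_num)]
      congr 1
      rw [show (3:ℝ) = ((3:ℕ):ℝ) by norm_num, Real.rpow_natCast]
      norm_num
    have e4 : (4:ℝ) ^ (-(n:ℝ)) = (4:ℝ)⁻¹ ^ n := by
      rw [Real.rpow_neg (by norm_num), Real.rpow_natCast, inv_pow]
    have e5base : (4:ℝ)⁻¹ ^ n ≤ 4 * lam := by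
      have hpoweq : (4:ℝ)⁻¹ ^ n₀ = (4:ℝ)⁻¹ ^ n * 4⁻¹ := by rw [hns, pow_succ]
      nlinarith [hQ]
    have e5 : ((4:ℝ)⁻¹ ^ n) ^ α ≤ (4 * lam) ^ α :=
      Real.rpow_le_rpow (by positivity) e5base (le_of_lt hα0)
    have e6 : ((4:ℝ) * lam) ^ α = 4 ^ α * lam ^ α :=
      Real.mul_rpow (by norm_num) (le_of_lt hlt)
    have e7 : (4:ℝ) ^ α ≤ 4 := by
      have := Real.rpow_le_rpow_of_exponent_le (show (1:ℝ) ≤ 4 by norm_num) (le_of_lt hα1)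
      rwa [Real.rpow_one] at this
    have hlampow : (0:ℝ) ≤ lam ^ α := Real.rpow_nonneg (le_of_lt hlt) α
    have hchain : ((4:ℝ)⁻¹) ^ (f α n) ≤ 256 * lam ^ α := by
      calc ((4:ℝ)⁻¹) ^ (f α n) = (4:ℝ) ^ (-(f α n : ℝ)) := e1
        _ ≤ (4:ℝ) ^ ((3:ℝ) - α * n) := e2
        _ = 64 * ((4:ℝ) ^ (-(n:ℝ))) ^ α := e3
        _ = 64 * ((4:ℝ)⁻¹ ^ n) ^ α := by rw [e4]
        _ ≤ 64 * ((4 * lam) ^ α) := by nlinarith [e5]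
        _ = 64 * (4 ^ α * lam ^ α) := by rw [e6]
        _ ≤ 64 * (4 * lam ^ α) := by nlinarith [e7]
        _ = 256 * lam ^ α := by ring
    calc (3:ENNReal) * ENNReal.ofReal ((4:ℝ)⁻¹ ^ f α n)
        ≤ 3 * ENNReal.ofReal (256 * lam ^ α) :=
          mul_le_mul_right (ENNReal.ofReal_le_ofReal hchain) 3
      _ = ENNReal.ofReal (768 * lam ^ α) := by
          rw [show (768:ℝ) * lam ^ α = 3 * (256 * lam ^ α) by ring,
            ENNReal.ofReal_mul (by norm_num : (0:ℝ) ≤ 3),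
            ENNReal.ofReal_mul (by norm_num : (0:ℝ) ≤ 256),
            ENNReal.ofReal_ofNat, ENNReal.ofReal_ofNat]

lemma arc_sub (a ℓ : ℝ) (h0 : 0 ≤ ℓ) (h2 : ℓ ≤ 2) :
    {x ∈ Set.Ico (0:ℝ) 1 |
        ((2 * g α x : ℝ) : Circle2) ∈ (fun t : ℝ => (t : Circle2)) '' Set.Icc a (a+ℓ)}
    ⊆ ⋃ t ∈ Finset.range 3, {x ∈ Set.Ico (0:ℝ) 1 |
        g α x ∈ Set.Icc (a/2 + ((⌈-a/2 - ℓ/2⌉ + (t:ℤ) : ℤ) : ℝ))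
          (a/2 + ℓ/2 + ((⌈-a/2 - ℓ/2⌉ + (t:ℤ) : ℤ) : ℝ))} := by
  rintro x ⟨hx, t, ht, hteq⟩
  have hg := g_mem α x
  have hg0 := hg.1
  have hg1 := hg.2
  obtain ⟨z, hzeq⟩ : ∃ z : ℤ, (z:ℝ) * 2 = 2 * g α x - t := by
    have h1 : ((2 * g α x - t : ℝ) : Circle2) = 0 := by
      rw [AddCircle.coe_sub, sub_eq_zero]
      exact hteq.symm
    obtain ⟨z, hz⟩ := (AddCircle.coe_eq_zero_iff (2:ℝ)).1 h1
    exact ⟨z, by rw [← hz, zsmul_eq_mul]⟩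
  have hgeq : g α x = t/2 + z := by linarith
  have hta : a ≤ t := ht.1
  have htb : t ≤ a + ℓ := ht.2
  set k₀ : ℤ := ⌈-a/2 - ℓ/2⌉ with hk₀
  have hceil : -a/2 - ℓ/2 ≤ (k₀:ℝ) := Int.le_ceil _
  have hzge : k₀ ≤ z := by
    rw [hk₀]
    apply Int.ceil_le.2
    linarith
  have hzle : z ≤ k₀ + 2 := by
    have : (z:ℝ) ≤ (k₀:ℝ) + 2 := by linarith
    exact_mod_cast this
  have htmem : (z - k₀).toNat ∈ Finset.range 3 := by
    simp only [Finset.mem_range]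
    omega
  apply Set.mem_biUnion htmem
  refine ⟨hx, ?_, ?_⟩
  · have hzz : k₀ + ((z - k₀).toNat : ℤ) = z := by omega
    rw [hzz]
    push_cast
    linarith
  · have hzz : k₀ + ((z - k₀).toNat : ℤ) = z := by omega
    rw [hzz]
    push_cast
    linarith

lemma arc_bound (a ℓ : ℝ) (h0 : 0 ≤ ℓ) (h2 : ℓ ≤ 2) :
    volume {x ∈ Set.Ico (0:ℝ) 1 |
        ((2 * g α x : ℝ) : Circle2) ∈ (fun t : ℝ => (t : Circle2)) '' Set.Icc a (a+ℓ)}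
      ≤ ENNReal.ofReal (2304 * ℓ ^ α) := by
  refine (measure_mono (arc_sub hα a ℓ h0 h2)).trans ?_
  refine (measure_biUnion_finset_le _ _).trans ?_
  have hone : ∀ t ∈ Finset.range 3,
      volume {x ∈ Set.Ico (0:ℝ) 1 |
        g α x ∈ Set.Icc (a/2 + ((⌈-a/2 - ℓ/2⌉ + (t:ℤ) : ℤ) : ℝ))
          (a/2 + ℓ/2 + ((⌈-a/2 - ℓ/2⌉ + (t:ℤ) : ℤ) : ℝ))}
      ≤ ENNReal.ofReal (768 * (ℓ/2) ^ α) := by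
    intro t _
    have hbd := Icc_bound hα (a/2 + ((⌈-a/2 - ℓ/2⌉ + (t:ℤ) : ℤ) : ℝ))
      (a/2 + ℓ/2 + ((⌈-a/2 - ℓ/2⌉ + (t:ℤ) : ℤ) : ℝ)) (by linarith) (by linarith)
    rw [show (a/2 + ℓ/2 + ((⌈-a/2 - ℓ/2⌉ + (t:ℤ) : ℤ) : ℝ))
      - (a/2 + ((⌈-a/2 - ℓ/2⌉ + (t:ℤ) : ℤ) : ℝ)) = ℓ/2 by ring] at hbd
    exact hbd
  refine (Finset.sum_le_sum hone).trans ?_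
  rw [Finset.sum_const, Finset.card_range, nsmul_eq_mul, Nat.cast_ofNat]
  have heq : (3:ENNReal) * ENNReal.ofReal (768 * (ℓ/2)^α) = ENNReal.ofReal (2304 * (ℓ/2)^α) := by
    rw [show (2304:ℝ) * (ℓ/2)^α = 3 * (768 * (ℓ/2)^α) by ring,
      ENNReal.ofReal_mul (by norm_num : (0:ℝ) ≤ 3),
      ENNReal.ofReal_mul (by norm_num : (0:ℝ) ≤ 768),
      ENNReal.ofReal_ofNat, ENNReal.ofReal_ofNat]
  rw [heq]
  apply ENNReal.ofReal_le_ofReal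
  have hmono : (ℓ/2) ^ α ≤ ℓ ^ α := Real.rpow_le_rpow (by linarith) (by linarith) (le_of_lt hα.1)
  linarith

end FinalBounds

end FrostAux

/-- For every `α ∈ (0,1)`, with `δ = 1 - α`, there are `(N_j)` and a closed `E ⊆ 𝕋` with
`E ⊆ A(N_j, 1-α)` for all `j`, such that for every `s ∈ (0, α)` there are `c_s > 0` and a
probability measure `μ` concentrated on `E` with `μ(I) ≤ c_s·|I|^s` for every arc `I`. -/
theorem exists_frostman_measure_on_nbhdGrid_set (α : ℝ) (hα : α ∈ Set.Ioo (0 : ℝ) 1) :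
    ∃ N : ℕ → ℕ, StrictMono N ∧ (∀ j, 0 < N j) ∧
      ∃ E : Set Circle2, IsClosed E ∧ (∀ j, E ⊆ nbhdGrid (N j) (1 - α)) ∧
        ∀ s ∈ Set.Ioo (0 : ℝ) α, ∃ c : ℝ, 0 < c ∧
          ∃ μ : Measure Circle2, IsProbabilityMeasure μ ∧ μ Eᶜ = 0 ∧
            ∀ a ℓ : ℝ, 0 ≤ ℓ →
              μ ((fun t : ℝ => (t : Circle2)) '' Set.Icc a (a + ℓ)) ≤
                ENNReal.ofReal (c * ℓ ^ s) := by
  classical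
  refine ⟨fun j => 4 ^ (FrostAux.m α j), ?_, ?_, ?_⟩
  · intro i j hij
    exact Nat.pow_lt_pow_right (by norm_num) (FrostAux.m_strictMono hα hij)
  · intro j
    exact pow_pos (by norm_num) _
  refine ⟨⋂ j, nbhdGrid (4 ^ (FrostAux.m α j)) (1 - α), ?_, ?_, ?_⟩
  · exact isClosed_iInter (fun j => FrostAux.isClosed_nbhdGrid _ _)
  · intro j
    exact Set.iInter_subset _ j
  intro s hs
  refine ⟨4608, by norm_num, ?_⟩
  have hcont : Continuous (fun t : ℝ => (t : Circle2)) := AddCircle.continuous_mk' 2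
  set h : ℝ → Circle2 := fun x => ((2 * FrostAux.g α x : ℝ) : Circle2) with hh
  have hmeas : Measurable h :=
    hcont.measurable.comp ((FrostAux.measurable_g α).const_mul 2)
  set μ := Measure.map h (volume.restrict (Set.Ico (0:ℝ) 1)) with hμ
  have hEclosed : IsClosed (⋂ j, nbhdGrid (4 ^ (FrostAux.m α j)) (1 - α)) :=
    isClosed_iInter (fun j => FrostAux.isClosed_nbhdGrid _ _)
  have hprob : IsProbabilityMeasure μ := by
    have hres : IsProbabilityMeasure (volume.restrict (Set.Ico (0:ℝ) 1)) := by
      constructor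
      rw [Measure.restrict_apply MeasurableSet.univ, Set.univ_inter, Real.volume_Ico]
      norm_num
    exact Measure.isProbabilityMeasure_map hmeas.aemeasurable
  refine ⟨μ, hprob, ?_, ?_⟩
  · rw [hμ, Measure.map_apply hmeas hEclosed.measurableSet.compl,
      Measure.restrict_apply (hmeas hEclosed.measurableSet.compl)]
    have hempty : h ⁻¹' (⋂ j, nbhdGrid (4 ^ (FrostAux.m α j)) (1 - α))ᶜ ∩ Set.Ico (0:ℝ) 1
        = ∅ := by
      ext x
      simp only [Set.mem_inter_iff, Set.mem_preimage, Set.mem_compl_iff, Set.mem_iInter,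
        Set.mem_empty_iff_false, iff_false, not_and]
      intro hxE hxI
      exact hxE (fun j => FrostAux.mem_nbhdGrid hα x hxI.1 j)
    rw [hempty]
    exact measure_empty
  · intro a ℓ hℓ
    have harc_meas : MeasurableSet ((fun t : ℝ => (t : Circle2)) '' Set.Icc a (a+ℓ)) :=
      ((isCompact_Icc).image hcont).isClosed.measurableSet
    rw [hμ, Measure.map_apply hmeas harc_meas, Measure.restrict_apply (hmeas harc_meas)]
    have hseteq : h ⁻¹' ((fun t : ℝ => (t : Circle2)) '' Set.Icc a (a+ℓ)) ∩ Set.Ico (0:ℝ) 1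
        = {x ∈ Set.Ico (0:ℝ) 1 |
            ((2 * FrostAux.g α x : ℝ) : Circle2) ∈ (fun t : ℝ => (t : Circle2)) '' Set.Icc a (a+ℓ)} := by
      ext x
      simp only [Set.mem_inter_iff, Set.mem_preimage, Set.mem_setOf_eq, hh]
      tauto
    rw [hseteq]
    obtain ⟨hs0, hsα⟩ := hs
    rcases le_or_gt ℓ 2 with hc | hc
    · refine (FrostAux.arc_bound hα a ℓ hℓ hc).trans ?_
      apply ENNReal.ofReal_le_ofReal
      rcases eq_or_lt_of_le hℓ with h0 | hpos
      · rw [← h0, Real.zero_rpow (ne_of_gt hα.1), Real.zero_rpow (ne_of_gt hs0)]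
        norm_num
      · rcases le_or_gt ℓ 1 with h1 | h1
        · have hmono : ℓ ^ α ≤ ℓ ^ s :=
            Real.rpow_le_rpow_of_exponent_ge hpos h1 (le_of_lt hsα)
          nlinarith [Real.rpow_nonneg (le_of_lt hpos) s]
        · have ha1 : ℓ ^ α ≤ ℓ ^ (1:ℝ) :=
            Real.rpow_le_rpow_of_exponent_le (le_of_lt h1) (le_of_lt hα.2)
          have ha3 : ℓ ^ (0:ℝ) ≤ ℓ ^ s :=
            Real.rpow_le_rpow_of_exponent_le (le_of_lt h1) (le_of_lt hs0)
          rw [Real.rpow_one] at ha1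
          rw [Real.rpow_zero] at ha3
          nlinarith
    · have hle1 : volume {x ∈ Set.Ico (0:ℝ) 1 |
          ((2 * FrostAux.g α x : ℝ) : Circle2) ∈ (fun t : ℝ => (t : Circle2)) '' Set.Icc a (a+ℓ)}
          ≤ 1 := by
        refine (measure_mono (fun x hx => hx.1)).trans ?_
        rw [Real.volume_Ico]
        norm_num
      refine hle1.trans ?_
      have hℓ1 : (1:ℝ) ≤ ℓ ^ s := by
        have := Real.rpow_le_rpow_of_exponent_le (by linarith : (1:ℝ) ≤ ℓ) (le_of_lt hs0)
        rwa [Real.rpow_zero] at this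
      rw [show (1:ENNReal) = ENNReal.ofReal 1 by simp]
      apply ENNReal.ofReal_le_ofReal
      nlinarith


end
end
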